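/- arXiv:2006.06843 — 9 statements merged into one kernel-verified Lean document; each statement's English description precedes it below -/
import Mathlib

section
/- Let S be a subset of ℝ^D, let p₁,…,p_m ∈ S, and let p* ∈ S satisfy ∑_{j=1}^m ‖p*−p_j‖ ≤ ∑_{j=1}^m ‖p−p_j‖ for all p ∈ S (p* is a geometric median of p₁,…,p_m in S for the extrinsic distance). Let ω ∈ S with ω ≠ p*, let T be a linear subspace of ℝ^D, let v be the orthogonal projection of ω−p* onto T, and assume v ≠ 0. Let ψ ∈ [0,π/2) be determined by cos ψ = ‖v‖/‖ω−p*‖ (ψ is the angle between ω−p* and T). Assume there exists a curve γ : [0,1] → S with γ(0) = p* whose right derivative at 0 equals v, i.e. (γ(t)−γ(0))/t → v as t → 0⁺. Let α ∈ (0, cos ψ/(1+cos ψ)), let C_α := (1−α)/(√(1−2α)·cos ψ − α·sin ψ), and let ε > 0. If ‖ω−p*‖ ≥ C_α·ε, then the number of indices j ∈ {1,…,m} with ‖p_j−ω‖ ≥ ε is at least α·m. -/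
open Filter Set
open scoped RealInnerProductSpace Topology

section median_aux

lemma aux_scalar (R ε c s A B : ℝ) (hR : 0 < R) (hε : 0 < ε) (hεR : ε < R)
    (hc : 0 ≤ c) (hs : 0 ≤ s) (hB : 0 ≤ B) (hdisk : (A - R)^2 + B^2 ≤ ε^2) :
    (c * Real.sqrt (1 - (ε/R)^2) - s * (ε/R)) * Real.sqrt (A^2 + B^2) ≤ c * A - s * B := by
  have hA : 0 < A := by nlinarith [sq_nonneg B, sq_nonneg (A - R)]
  have hRe : 0 ≤ R^2 - ε^2 := by nlinarith
  have key : (R^2 - ε^2) * B^2 ≤ ε^2 * A^2 := by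
    have h4 : 0 ≤ (R^2 - ε^2) * (ε^2 - ((A-R)^2 + B^2)) :=
      mul_nonneg hRe (by linarith)
    nlinarith [sq_nonneg (R * (A - R) + ε^2)]
  have hNsq : Real.sqrt (A^2 + B^2) ^ 2 = A^2 + B^2 :=
    Real.sq_sqrt (by positivity)
  have hNnn : 0 ≤ Real.sqrt (A^2 + B^2) := Real.sqrt_nonneg _
  have hcpart : Real.sqrt (1 - (ε/R)^2) * Real.sqrt (A^2 + B^2) ≤ A := by
    rw [← Real.sqrt_mul (by
      have : (ε/R)^2 ≤ 1 := by
        rw [div_pow, div_le_one (by positivity)]; nlinarith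
      linarith)]
    have heq : (1 - (ε/R)^2) * (A^2 + B^2) = ((R^2 - ε^2) * (A^2 + B^2)) / R^2 := by
      field_simp
    have hle : (1 - (ε/R)^2) * (A^2 + B^2) ≤ A^2 := by
      rw [heq, div_le_iff₀ (by positivity)]; nlinarith
    calc Real.sqrt ((1 - (ε/R)^2) * (A^2 + B^2)) ≤ Real.sqrt (A^2) := Real.sqrt_le_sqrt hle
    _ = A := Real.sqrt_sq hA.le
  have hspart : B ≤ (ε/R) * Real.sqrt (A^2 + B^2) := by
    have h2 : B^2 ≤ ((ε/R) * Real.sqrt (A^2+B^2))^2 := by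
      rw [mul_pow, hNsq, div_pow, div_mul_eq_mul_div, le_div_iff₀ (by positivity)]
      nlinarith
    have h3 : 0 ≤ (ε/R) * Real.sqrt (A^2+B^2) := by positivity
    nlinarith
  nlinarith [mul_le_mul_of_nonneg_left hcpart hc, mul_le_mul_of_nonneg_left hspart hs]

variable {E : Type*} [NormedAddCommGroup E] [InnerProductSpace ℝ E]

lemma aux_slope_zero (γ : ℝ → E) (v : E)
    (hγ' : Tendsto (fun t : ℝ => t⁻¹ • (γ t - γ 0)) (𝓝[>] 0) (𝓝 v)) :
    Tendsto (fun t : ℝ => t⁻¹ * ‖γ t - γ 0‖) (𝓝[>] 0) (𝓝 ‖v‖) := by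
  apply hγ'.norm.congr'
  filter_upwards [self_mem_nhdsWithin] with t (ht : 0 < t)
  rw [norm_smul, Real.norm_eq_abs, abs_of_pos (inv_pos.mpr ht)]

lemma aux_slope_ne (γ : ℝ → E) (v a : E) (ha : a ≠ 0)
    (hγ' : Tendsto (fun t : ℝ => t⁻¹ • (γ t - γ 0)) (𝓝[>] 0) (𝓝 v)) :
    Tendsto (fun t : ℝ => t⁻¹ * (‖γ t - γ 0 + a‖ - ‖a‖)) (𝓝[>] 0)
      (𝓝 (⟪a, v⟫ / ‖a‖)) := by
  set w : ℝ → E := fun t => t⁻¹ • (γ t - γ 0) with hw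
  have hanorm : 0 < ‖a‖ := norm_pos_iff.mpr ha
  have ht0 : Tendsto (fun t : ℝ => t) (𝓝[>] (0:ℝ)) (𝓝 0) :=
    Filter.tendsto_id.mono_left nhdsWithin_le_nhds
  have hnum : Tendsto (fun t : ℝ => 2 * ⟪a, w t⟫ + t * ‖w t‖^2) (𝓝[>] 0)
      (𝓝 (2 * ⟪a, v⟫ + 0 * ‖v‖^2)) :=
    ((tendsto_const_nhds.inner hγ').const_mul 2).add (ht0.mul ((hγ'.norm).pow 2))
  have hden : Tendsto (fun t : ℝ => ‖a + t • w t‖ + ‖a‖) (𝓝[>] 0)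
      (𝓝 (‖a + (0:ℝ) • v‖ + ‖a‖)) :=
    ((tendsto_const_nhds.add (ht0.smul hγ')).norm).add tendsto_const_nhds
  have hden' : ‖a + (0:ℝ) • v‖ + ‖a‖ = ‖a‖ + ‖a‖ := by simp
  rw [hden'] at hden
  have hlim : Tendsto (fun t : ℝ => (2 * ⟪a, w t⟫ + t * ‖w t‖^2) / (‖a + t • w t‖ + ‖a‖))
      (𝓝[>] 0) (𝓝 ((2 * ⟪a, v⟫ + 0 * ‖v‖^2) / (‖a‖ + ‖a‖))) :=
    hnum.div hden (by positivity)
  have hval : (2 * ⟪a, v⟫ + 0 * ‖v‖^2) / (‖a‖ + ‖a‖) = ⟪a, v⟫ / ‖a‖ := by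
    rw [zero_mul, add_zero]
    rw [show ‖a‖ + ‖a‖ = 2 * ‖a‖ by ring, mul_div_mul_left _ _ (two_ne_zero)]
  rw [hval] at hlim
  apply hlim.congr'
  filter_upwards [self_mem_nhdsWithin] with t (ht : 0 < t)
  have htw : t • w t = γ t - γ 0 := smul_inv_smul₀ ht.ne' _
  have hid : ‖a + t • w t‖^2 = ‖a‖^2 + 2 * (t * ⟪a, w t⟫) + t^2 * ‖w t‖^2 := by
    rw [norm_add_sq_real, real_inner_smul_right, norm_smul, mul_pow, Real.norm_eq_abs, sq_abs]
  have hNpos : 0 < ‖a + t • w t‖ + ‖a‖ := by positivity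
  rw [htw, show γ t - γ 0 + a = a + (γ t - γ 0) from add_comm _ _, ← htw]
  rw [div_eq_iff hNpos.ne', eq_comm, inv_mul_eq_div, div_mul_eq_mul_div,
    div_eq_iff ht.ne']
  linear_combination hid

lemma aux_geom (v u x : E) (R ε c s : ℝ) (hR : 0 < R) (hε : 0 < ε) (hεR : ε < R)
    (hc : 0 ≤ c) (hs : 0 ≤ s) (hRnorm : ‖u‖ = R) (hvnorm : ‖v‖ = c * R)
    (hvpos : 0 < ‖v‖)
    (hvu : ⟪v, u⟫ = ‖v‖^2)
    (hxε : ‖x‖ ≤ ε)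
    (haux : ∀ A B : ℝ, 0 ≤ B → (A - R)^2 + B^2 ≤ ε^2 →
      (c * Real.sqrt (1 - (ε/R)^2) - s * (ε/R)) * Real.sqrt (A^2 + B^2) ≤ c * A - s * B)
    (hcs : s^2 + c^2 = 1) :
    ‖v‖ * (c * Real.sqrt (1 - (ε/R)^2) - s * (ε/R)) * ‖u + x‖ ≤ ⟪u + x, v⟫ := by
  obtain ⟨Q, hQ⟩ : ∃ y, y = c * Real.sqrt (1 - (ε/R)^2) - s * (ε/R) := ⟨_, rfl⟩
  rw [← hQ] at haux ⊢
  obtain ⟨a, ha⟩ : ∃ y : E, y = u + x := ⟨_, rfl⟩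
  rw [← ha]
  obtain ⟨uh, huh⟩ : ∃ y : E, y = R⁻¹ • u := ⟨_, rfl⟩
  have huh1 : ‖uh‖ = 1 := by
    rw [huh, norm_smul, Real.norm_eq_abs, abs_of_pos (inv_pos.mpr hR), hRnorm]
    field_simp
  obtain ⟨vh, hvh⟩ : ∃ y : E, y = ‖v‖⁻¹ • v := ⟨_, rfl⟩
  have huv1 : ‖vh‖ = 1 := by
    rw [hvh, norm_smul, Real.norm_eq_abs, abs_of_pos (inv_pos.mpr hvpos)]
    field_simp
  obtain ⟨tc, htc⟩ : ∃ y : ℝ, y = ⟪uh, x⟫ := ⟨_, rfl⟩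
  obtain ⟨xp, hxp⟩ : ∃ y : E, y = x - tc • uh := ⟨_, rfl⟩
  have hperp : ⟪uh, xp⟫ = 0 := by
    rw [hxp, inner_sub_right, real_inner_smul_right, real_inner_self_eq_norm_sq, huh1, htc]
    ring
  have hx2 : tc^2 + ‖xp‖^2 = ‖x‖^2 := by
    have hxdec : x = tc • uh + xp := by rw [hxp]; abel
    have h := norm_add_sq_real (tc • uh) xp
    rw [← hxdec, norm_smul, Real.norm_eq_abs, huh1, real_inner_smul_left, hperp] at h
    rw [h, mul_one, sq_abs]; ring
  obtain ⟨A, hA⟩ : ∃ y : ℝ, y = R + tc := ⟨_, rfl⟩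
  have hu_eq : u = R • uh := by rw [huh, smul_smul, mul_inv_cancel₀ hR.ne', one_smul]
  have hadec : a = A • uh + xp := by
    rw [ha, hA, hxp, add_smul, hu_eq]; abel
  have hnormA : ‖a‖^2 = A^2 + ‖xp‖^2 := by
    have h := norm_add_sq_real (A • uh) xp
    rw [← hadec, norm_smul, Real.norm_eq_abs, huh1, real_inner_smul_left, hperp] at h
    rw [h, mul_one, sq_abs]; ring
  have hdisk : (A - R)^2 + ‖xp‖^2 ≤ ε^2 := by
    have h : A - R = tc := by rw [hA]; ring
    rw [h]
    nlinarith [norm_nonneg x]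
  have hcpos : 0 < c := by nlinarith
  have hvhu : ⟪vh, uh⟫ = c := by
    rw [hvh, huh, real_inner_smul_left, real_inner_smul_right, hvu, hvnorm]
    field_simp
  obtain ⟨w, hww⟩ : ∃ y : E, y = vh - c • uh := ⟨_, rfl⟩
  have hwsq : ‖w‖^2 = s^2 := by
    have h := norm_sub_sq_real vh (c • uh)
    have hcuh : ‖c • uh‖^2 = c^2 := by
      rw [norm_smul, Real.norm_eq_abs, huh1, mul_one, sq_abs]
    rw [← hww, real_inner_smul_right, hvhu, huv1, hcuh] at h
    linear_combination h - hcs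
  have hwnorm : ‖w‖ = s := by
    rw [← Real.sqrt_sq (norm_nonneg w), hwsq, Real.sqrt_sq hs]
  have hvha : c * A - s * ‖xp‖ ≤ ⟪vh, a⟫ := by
    have hvhdec : vh = c • uh + w := by
      rw [hww, add_comm, sub_add_cancel]
    have h2 : ⟪vh, xp⟫ = ⟪w, xp⟫ := by
      rw [hvhdec, inner_add_left, real_inner_smul_left, hperp]; ring
    have h1 : ⟪vh, a⟫ = A * c + ⟪w, xp⟫ := by
      rw [hadec, inner_add_right, real_inner_smul_right, hvhu, h2]
    have hCS : -(‖w‖ * ‖xp‖) ≤ ⟪w, xp⟫ := (abs_le.mp (abs_real_inner_le_norm w xp)).1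
    rw [h1, hwnorm] at *
    linarith
  have hkey := haux A ‖xp‖ (norm_nonneg _) hdisk
  have hna : ‖a‖ = Real.sqrt (A^2 + ‖xp‖^2) := by
    rw [← hnormA, Real.sqrt_sq (norm_nonneg a)]
  have h5 : Q * ‖a‖ ≤ ‖v‖⁻¹ * ⟪v, a⟫ := by
    rw [← real_inner_smul_left, ← hvh, hna]
    exact le_trans hkey hvha
  have h6 := mul_le_mul_of_nonneg_left h5 hvpos.le
  rw [← mul_assoc, ← mul_assoc, mul_inv_cancel₀ hvpos.ne', one_mul] at h6
  rw [real_inner_comm] at h6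
  exact h6



lemma aux_consts (c s α β ε R : ℝ) (hcpos : 0 < c) (hc1 : c ≤ 1) (hs0 : 0 ≤ s) (hs1 : s ≤ 1)
    (hcs : s^2 + c^2 = 1) (hα0 : 0 < α) (hα2 : α * (1 + c) < c)
    (hβ0 : 0 ≤ β) (hβsq : β^2 = 1 - 2*α)
    (hε : 0 < ε) (hR : 0 < R) (hfar : ((1-α)/(β*c - α*s)) * ε ≤ R) :
    0 < β*c - α*s ∧ ε < R ∧
      α ≤ (1-α) * (c * Real.sqrt (1 - (ε/R)^2) - s * (ε/R)) := by
  have h2α : 2*α < 1 := by nlinarith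
  have h1α : 0 < 1 - α := by linarith
  have hβα : β < 1 - α := by nlinarith
  have hden : 0 < β*c - α*s := by
    have hfac : (β*c)^2 - (α*s)^2 = (c - α*(1+c))*(c + α*(1-c)) := by
      linear_combination c^2 * hβsq - α^2 * hcs
    have h1 : 0 < (β*c)^2 - (α*s)^2 := by
      rw [hfac]
      exact mul_pos (by linarith) (by nlinarith)
    by_contra h
    push_neg at h
    nlinarith [mul_nonneg hα0.le hs0, mul_nonneg hβ0 hcpos.le]
  have hlt : β*c - α*s < 1 - α := by nlinarith [mul_nonneg hα0.le hs0]
  have hC1 : 1 < (1-α)/(β*c - α*s) := (one_lt_div hden).mpr hlt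
  have hεR : ε < R :=
    lt_of_lt_of_le ((lt_mul_iff_one_lt_left hε).mpr hC1) hfar
  refine ⟨hden, hεR, ?_⟩
  have hσs0 : ε/R ≤ (β*c - α*s)/(1-α) := by
    rw [div_le_div_iff₀ hR h1α]
    rw [div_mul_eq_mul_div, div_le_iff₀ hden] at hfar
    linarith
  have hσ0 : 0 < ε/R := div_pos hε hR
  have hkey : (β*s + α*c)^2 + (β*c - α*s)^2 = (1-α)^2 := by
    linear_combination (β^2 + α^2)*hcs + hβsq
  have hsqrtge : (β*s + α*c)/(1-α) ≤ Real.sqrt (1 - (ε/R)^2) := by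
    have hnum0 : 0 ≤ (β*s + α*c)/(1-α) := by positivity
    have h1ε : 0 ≤ 1 - (ε/R)^2 := by
      have : (ε/R)^2 ≤ 1 := by
        rw [div_pow, div_le_one (by positivity)]
        nlinarith
      linarith
    rw [Real.le_sqrt hnum0 h1ε]
    have e1 : (ε/R)^2 ≤ ((β*c - α*s)/(1-α))^2 := pow_le_pow_left₀ hσ0.le hσs0 2
    have e2 : ((β*s + α*c)/(1-α))^2 + ((β*c - α*s)/(1-α))^2 = 1 := by
      rw [div_pow, div_pow, ← add_div, div_eq_one_iff_eq (by positivity)]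
      exact hkey
    linarith
  have t1 : c * ((β*s + α*c)/(1-α)) ≤ c * Real.sqrt (1 - (ε/R)^2) :=
    mul_le_mul_of_nonneg_left hsqrtge hcpos.le
  have t2 : s * (ε/R) ≤ s * ((β*c - α*s)/(1-α)) :=
    mul_le_mul_of_nonneg_left hσs0 hs0
  have t3 : α/(1-α) = c*((β*s + α*c)/(1-α)) - s*((β*c - α*s)/(1-α)) := by
    field_simp
    linear_combination -α * hcs
  have t4 : α/(1-α) ≤ c * Real.sqrt (1 - (ε/R)^2) - s * (ε/R) := by
    rw [t3]; linarith
  rw [div_le_iff₀ h1α] at t4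
  linarith [t4]

lemma aux_count (Q vn α k kc mm : ℝ) (hvpos : 0 < vn) (hQα : α ≤ (1-α)*Q)
    (hα0 : 0 < α) (hα1 : α < 1)
    (hk0 : 0 ≤ k) (hkc0 : 0 ≤ kc) (hm : k + kc = mm)
    (h0 : 0 ≤ k * vn + kc * (-(vn * Q))) : α * mm ≤ k := by
  have hQ0 : 0 < Q := by nlinarith
  have h7 : kc * Q ≤ k := by nlinarith
  nlinarith [mul_le_mul_of_nonneg_right hQα hkc0]

end median_aux


open Finset Real in
/-- Extrinsic case of Lemma 1 in ambient Euclidean space `ℝ^D`. -/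
theorem median_of_means_extrinsic
    (D : ℕ) (S : Set (EuclideanSpace ℝ (Fin D)))
    (m : ℕ) (p : Fin m → EuclideanSpace ℝ (Fin D))
    (pstar : EuclideanSpace ℝ (Fin D)) (hpstarS : pstar ∈ S)
    (hp : ∀ j, p j ∈ S)
    (hmed : ∀ q ∈ S, ∑ j, ‖pstar - p j‖ ≤ ∑ j, ‖q - p j‖)
    (ω : EuclideanSpace ℝ (Fin D)) (hωS : ω ∈ S) (hωne : ω ≠ pstar)
    (T : Submodule ℝ (EuclideanSpace ℝ (Fin D)))
    (v : EuclideanSpace ℝ (Fin D))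
    (hv : v = (T.orthogonalProjection (ω - pstar) : EuclideanSpace ℝ (Fin D)))
    (hvne : v ≠ 0)
    (ψ : ℝ) (hψ : ψ ∈ Set.Ico (0 : ℝ) (π / 2))
    (hcosψ : Real.cos ψ = ‖v‖ / ‖ω - pstar‖)
    (γ : ℝ → EuclideanSpace ℝ (Fin D))
    (hγS : ∀ t ∈ Set.Icc (0 : ℝ) 1, γ t ∈ S) (hγ0 : γ 0 = pstar)
    (hγ' : Filter.Tendsto (fun t : ℝ => t⁻¹ • (γ t - γ 0))
      (nhdsWithin 0 (Set.Ioi 0)) (nhds v))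
    (α : ℝ) (hα : α ∈ Set.Ioo (0 : ℝ) (Real.cos ψ / (1 + Real.cos ψ)))
    (Cα : ℝ)
    (hCα : Cα = (1 - α) / (Real.sqrt (1 - 2 * α) * Real.cos ψ - α * Real.sin ψ))
    (ε : ℝ) (hε : 0 < ε)
    (hfar : Cα * ε ≤ ‖ω - pstar‖) :
    α * m ≤ ({j | ε ≤ ‖p j - ω‖} : Finset (Fin m)).card := by
  classical
  obtain ⟨hψ0, hψ2⟩ := hψ
  obtain ⟨hα0, hα2⟩ := hα
  have hπ := Real.pi_pos
  set c : ℝ := Real.cos ψ with hcdef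
  set s : ℝ := Real.sin ψ with hsdef
  have hcpos : 0 < c := Real.cos_pos_of_mem_Ioo ⟨by linarith, hψ2⟩
  have hc1 : c ≤ 1 := Real.cos_le_one ψ
  have hs0 : 0 ≤ s := Real.sin_nonneg_of_nonneg_of_le_pi hψ0 (by linarith)
  have hs1 : s ≤ 1 := Real.sin_le_one ψ
  have hcs : s^2 + c^2 = 1 := Real.sin_sq_add_cos_sq ψ
  have hRpos : 0 < ‖ω - pstar‖ := norm_pos_iff.mpr (sub_ne_zero.mpr hωne)
  set R : ℝ := ‖ω - pstar‖ with hRdef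
  have h1c : (0:ℝ) < 1 + c := by linarith
  have hαc : α * (1 + c) < c := (lt_div_iff₀ h1c).mp hα2
  set β : ℝ := Real.sqrt (1 - 2 * α) with hβdef
  have hβsq : β^2 = 1 - 2*α := by
    rw [hβdef]
    refine Real.sq_sqrt ?_
    have hαc0 : 0 ≤ α * c := mul_nonneg hα0.le hcpos.le
    nlinarith
  have hβ0 : 0 ≤ β := Real.sqrt_nonneg _
  have hfar' : ((1-α)/(β*c - α*s)) * ε ≤ R := by rw [← hCα]; exact hfar
  obtain ⟨hden, hεR, hQα⟩ :=
    aux_consts c s α β ε R hcpos hc1 hs0 hs1 hcs hα0 hαc hβ0 hβsq hε hRpos hfar'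
  obtain ⟨Q, hQdef⟩ : ∃ y : ℝ, y = c * Real.sqrt (1 - (ε/R)^2) - s * (ε/R) := ⟨_, rfl⟩
  rw [← hQdef] at hQα
  have hvpos : 0 < ‖v‖ := norm_pos_iff.mpr hvne
  have hvnorm : ‖v‖ = c * R := by
    rw [hcosψ, div_mul_cancel₀ _ hRpos.ne']
  -- projection fact
  have hvT : v ∈ T := by rw [hv]; exact (T.orthogonalProjection (ω - pstar)).2
  have hvu : (inner ℝ v (ω - pstar) : ℝ) = ‖v‖^2 := by
    have hperp : (ω - pstar) - v ∈ Tᗮ := by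
      rw [hv]; exact T.sub_starProjection_mem_orthogonal _
    have h0 : (inner ℝ v ((ω - pstar) - v) : ℝ) = 0 :=
      (Submodule.mem_orthogonal T _).mp hperp v hvT
    rw [inner_sub_right, real_inner_self_eq_norm_sq] at h0
    linarith
  -- the directional derivatives
  set d : Fin m → ℝ := fun j =>
    if p j = pstar then ‖v‖ else (inner ℝ (pstar - p j) v : ℝ) / ‖pstar - p j‖ with hddef
  have hslope : ∀ j, Filter.Tendsto (fun t : ℝ => t⁻¹ * (‖γ t - p j‖ - ‖pstar - p j‖))
      (nhdsWithin 0 (Set.Ioi 0)) (nhds (d j)) := by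
    intro j
    by_cases hj : p j = pstar
    · have h0 := aux_slope_zero γ v hγ'
      rw [show d j = ‖v‖ by simp only [hddef]; rw [if_pos hj]]
      apply h0.congr
      intro t
      rw [hj, hγ0, sub_self, norm_zero, sub_zero]
    · have ha : pstar - p j ≠ 0 := sub_ne_zero.mpr fun h => hj h.symm
      have h0 := aux_slope_ne γ v (pstar - p j) ha hγ'
      rw [show d j = (inner ℝ (pstar - p j) v : ℝ) / ‖pstar - p j‖ by
        simp only [hddef]; rw [if_neg hj]]
      apply h0.congr
      intro t
      rw [hγ0, sub_add_sub_cancel]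
  have hsum0 : 0 ≤ ∑ j, d j := by
    have hsum := tendsto_finset_sum (Finset.univ : Finset (Fin m)) (fun j _ => hslope j)
    refine ge_of_tendsto hsum ?_
    filter_upwards [Ioc_mem_nhdsGT_of_mem (Set.left_mem_Ico.mpr zero_lt_one)] with t ht
    have hmem : γ t ∈ S := hγS t ⟨ht.1.le, ht.2⟩
    have hm2 := hmed (γ t) hmem
    have heq : ∑ j, t⁻¹ * (‖γ t - p j‖ - ‖pstar - p j‖)
        = t⁻¹ * (∑ j, ‖γ t - p j‖ - ∑ j, ‖pstar - p j‖) := by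
      rw [← Finset.sum_sub_distrib, Finset.mul_sum]
    rw [heq]
    exact mul_nonneg (inv_nonneg.mpr ht.1.le) (sub_nonneg.mpr hm2)
  set K : Finset (Fin m) := ({j | ε ≤ ‖p j - ω‖} : Finset (Fin m)) with hK
  have hKmem : ∀ j, j ∈ K ↔ ε ≤ ‖p j - ω‖ := by intro j; rw [hK]; simp
  have hdle : ∀ j ∈ K, d j ≤ ‖v‖ := by
    intro j _
    simp only [hddef]
    split_ifs with h
    · exact le_refl _
    · have hA : 0 < ‖pstar - p j‖ :=
        norm_pos_iff.mpr (sub_ne_zero.mpr fun hh => h hh.symm)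
      rw [div_le_iff₀ hA, mul_comm]
      exact real_inner_le_norm _ _
  have hgood : ∀ j ∈ Kᶜ, d j ≤ -(‖v‖ * Q) := by
    intro j hj
    rw [Finset.mem_compl] at hj
    have hxlt : ‖p j - ω‖ < ε := lt_of_not_ge fun hcon => hj ((hKmem j).mpr hcon)
    have hjne : p j ≠ pstar := by
      intro h
      rw [h, norm_sub_rev, ← hRdef] at hxlt
      linarith
    have haux : ∀ A B : ℝ, 0 ≤ B → (A - R)^2 + B^2 ≤ ε^2 →
        (c * Real.sqrt (1 - (ε/R)^2) - s * (ε/R)) * Real.sqrt (A^2 + B^2) ≤ c * A - s * B :=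
      fun A B hB hd => aux_scalar R ε c s A B hRpos hε hεR hcpos.le hs0 hB hd
    have hgeom := aux_geom v (ω - pstar) (p j - ω) R ε c s hRpos hε hεR hcpos.le hs0
      hRdef.symm hvnorm hvpos hvu hxlt.le haux hcs
    rw [show (ω - pstar) + (p j - ω) = p j - pstar from by abel, ← hQdef] at hgeom
    have hanorm : 0 < ‖pstar - p j‖ :=
      norm_pos_iff.mpr (sub_ne_zero.mpr fun hh => hjne hh.symm)
    simp only [hddef]
    rw [if_neg hjne, div_le_iff₀ hanorm]
    have h1 : (inner ℝ (pstar - p j) v : ℝ) = -(inner ℝ (p j - pstar) v : ℝ) := by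
      rw [show pstar - p j = -(p j - pstar) from by abel, inner_neg_left]
    have h2 : ‖pstar - p j‖ = ‖p j - pstar‖ := norm_sub_rev _ _
    rw [h1, h2, neg_mul]
    have := hgeom
    linarith [hgeom]
  have hsK : ∑ j ∈ K, d j ≤ (K.card : ℝ) * ‖v‖ := by
    have h := Finset.sum_le_card_nsmul K d ‖v‖ (fun j hj => hdle j hj)
    simpa [nsmul_eq_mul] using h
  have hsKc : ∑ j ∈ Kᶜ, d j ≤ (Kᶜ.card : ℝ) * (-(‖v‖ * Q)) := by
    have h := Finset.sum_le_card_nsmul Kᶜ d (-(‖v‖ * Q)) (fun j hj => hgood j hj)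
    simpa [nsmul_eq_mul] using h
  have hsplit : ∑ j ∈ K, d j + ∑ j ∈ Kᶜ, d j = ∑ j, d j := Finset.sum_add_sum_compl K d
  have h0 : 0 ≤ (K.card : ℝ) * ‖v‖ + (Kᶜ.card : ℝ) * (-(‖v‖ * Q)) := by linarith
  have hcards : (K.card : ℝ) + (Kᶜ.card : ℝ) = (m : ℝ) := by
    have h := Finset.card_add_card_compl K
    rw [Fintype.card_fin] at h
    exact_mod_cast congrArg (Nat.cast : ℕ → ℝ) h
  have hα1 : α < 1 := by
    have hαc0 : 0 ≤ α * c := mul_nonneg hα0.le hcpos.le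
    linarith
  exact aux_count Q ‖v‖ α (K.card : ℝ) (Kᶜ.card : ℝ) (m : ℝ) hvpos hQα hα0 hα1
    (Nat.cast_nonneg _) (Nat.cast_nonneg _) hcards h0
end

section
/- Let H be a real inner product space, let p₁,…,p_m ∈ H, and let p* ∈ H satisfy ∑_{j=1}^m ‖p*−p_j‖ ≤ ∑_{j=1}^m ‖p−p_j‖ for all p ∈ H (p* is a geometric median of p₁,…,p_m). Let α ∈ (0,1/2), let C_α := (1−α)/√(1−2α), let ε > 0, and let ω ∈ H. If ‖ω−p*‖ ≥ C_α·ε, then the number of indices j ∈ {1,…,m} with ‖p_j−ω‖ ≥ ε is at least α·m. -/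
open RealInnerProductSpace

/-- `C_α > 1` for `α ∈ (0, 1/2)`. -/
lemma one_lt_Calpha {α : ℝ} (hα0 : 0 < α) (hα2 : α < 1/2) :
    1 < (1 - α) / Real.sqrt (1 - 2*α) := by
  have hw0 : 0 < Real.sqrt (1 - 2*α) := Real.sqrt_pos.mpr (by linarith)
  have hw : Real.sqrt (1 - 2*α) < 1 - α := by
    rw [show (1:ℝ)-α = Real.sqrt ((1-α)^2) by rw [Real.sqrt_sq (by linarith)]]
    exact Real.sqrt_lt_sqrt (by linarith) (by nlinarith)
  exact (one_lt_div hw0).mpr hw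

set_option maxHeartbeats 1000000 in
/-- Key per-point real-number inequality: the gain from moving distance `t` toward `ω`. -/
lemma real_gain (α ε d s c t f0 ft : ℝ)
    (hα0 : 0 < α) (hα2 : α < 1/2) (hε : 0 < ε)
    (hs0 : 0 ≤ s) (hsε : s < ε)
    (hc : |c| ≤ s)
    (hd : (1 - α) / Real.sqrt (1 - 2*α) * ε ≤ d)
    (hf00 : 0 ≤ f0) (hft0 : 0 ≤ ft)
    (hf0sq : f0^2 = d^2 + 2*(d*c) + s^2)
    (hftsq : ft^2 = f0^2 - 2*(t*(d+c)) + t^2)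
    (ht0 : 0 < t) (htD : t ≤ d - ε) :
    t*(α/(1-α)) - t^2/(2*(d-ε)) ≤ f0 - ft := by
  have h1α : 0 < 1 - α := by linarith
  have h2α : 0 < 1 - 2*α := by linarith
  have hw0 : 0 < Real.sqrt (1 - 2*α) := Real.sqrt_pos.mpr h2α
  have hC1 : 1 < (1 - α) / Real.sqrt (1 - 2*α) := one_lt_Calpha hα0 hα2
  have hdε : ε < d := by
    have := mul_lt_mul_of_pos_left hC1 hε
    have h2 := hd
    nlinarith
  have hdpos : 0 < d := hε.trans hdε
  have hcc := abs_le.mp hc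
  -- d²(1-2α) ≥ (1-α)²ε²
  have hds : (1-α)*ε ≤ d * Real.sqrt (1-2*α) := by
    rw [div_mul_eq_mul_div, div_le_iff₀ hw0] at hd; linarith
  have hsq := Real.sq_sqrt h2α.le
  have hkey : (1-α)^2*ε^2 ≤ d^2*(1-2*α) := by
    nlinarith [hds, hsq, mul_pos hdpos hw0, mul_nonneg h1α.le hε.le]
  clear hd hds hC1 hw0 hsq
  -- f0 ≥ d - s ≥ d - ε > 0
  have hf0ge : d - s ≤ f0 := by
    have h2 : (d-s)^2 ≤ f0^2 := by
      nlinarith [mul_nonneg hdpos.le (show (0:ℝ) ≤ c + s by linarith)]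
    exact le_of_pow_le_pow_left₀ two_ne_zero hf00 h2
  have hf0pos : 0 < f0 := lt_of_lt_of_le (by linarith) hf0ge
  have hdc : 0 < d + c := by linarith
  -- (1-α)(d+c) ≥ α f0
  have e1 : (d^2 - s^2) * f0^2 ≤ d^2*(d+c)^2 := by
    have hsub : (d^2-s^2)*f0^2 = (d^2-s^2)*(d^2 + 2*(d*c) + s^2) := by rw [hf0sq]
    nlinarith [sq_nonneg (d*c + s^2), hsub]
  have hsε2 : s^2 ≤ ε^2 := pow_le_pow_left₀ hs0 hsε.le 2
  have e2' : α^2*d^2 ≤ (1-α)^2*(d^2 - s^2) := by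
    nlinarith [hkey, mul_le_mul_of_nonneg_left hsε2 (sq_nonneg (1-α))]
  have e4 : (α*f0)^2 * d^2 ≤ ((1-α)*(d+c))^2 * d^2 := by
    nlinarith [mul_le_mul_of_nonneg_left e1 (sq_nonneg (1-α)),
      mul_le_mul_of_nonneg_right e2' (sq_nonneg f0)]
  have e5 : (α*f0)^2 ≤ ((1-α)*(d+c))^2 :=
    le_of_mul_le_mul_right e4 (by positivity)
  have hAc : α*f0 ≤ (1-α)*(d+c) :=
    le_of_pow_le_pow_left₀ two_ne_zero (by positivity) e5
  -- ft ≤ f0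
  have hftsq' : ft^2 ≤ f0^2 := by
    nlinarith [mul_le_mul_of_nonneg_left (show t ≤ d + c by linarith) ht0.le, sq_nonneg t]
  have hftle : ft ≤ f0 := le_of_pow_le_pow_left₀ two_ne_zero hf00 hftsq'
  -- main chain
  have h1 : 2*(t*(d+c)) - t^2 ≤ (f0 - ft)*(2*f0) := by nlinarith [sq_nonneg (f0 - ft)]
  have g1 : t*(α/(1-α)) ≤ (t*(d+c))/f0 := by
    rw [mul_div_assoc', div_le_div_iff₀ h1α hf0pos]
    nlinarith [mul_le_mul_of_nonneg_left hAc ht0.le]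
  have g2 : t^2/(2*f0) ≤ t^2/(2*(d-ε)) := by
    apply div_le_div_of_nonneg_left (by positivity) (by linarith) (by linarith)
  have g3 : (t*(d+c))/f0 - t^2/(2*f0) ≤ f0 - ft := by
    rw [div_sub_div _ _ (ne_of_gt hf0pos) (by positivity : (2:ℝ)*f0 ≠ 0),
      div_le_iff₀ (by positivity)]
    nlinarith [mul_le_mul_of_nonneg_right h1 hf0pos.le]
  linarith

set_option maxHeartbeats 1000000 in
open Finset in
/-- Flat (linear) instance of Lemma 1(a): in a real inner product space, if `p*` is a
geometric median of `p₁,…,p_m` and `ω` is at least `C_α·ε` away from `p*`, then at least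
an `α` fraction of the points are at least `ε` away from `ω`. -/
theorem median_of_means_flat
    {H : Type*} [NormedAddCommGroup H] [InnerProductSpace ℝ H]
    (m : ℕ) (p : Fin m → H) (pstar : H)
    (hmed : ∀ q : H, ∑ j, ‖pstar - p j‖ ≤ ∑ j, ‖q - p j‖)
    (α : ℝ) (hα : α ∈ Set.Ioo (0 : ℝ) (1/2))
    (ε : ℝ) (hε : 0 < ε) (ω : H)
    (hfar : (1 - α) / Real.sqrt (1 - 2 * α) * ε ≤ ‖ω - pstar‖) :
    α * m ≤ ({j | ε ≤ ‖p j - ω‖} : Finset (Fin m)).card := by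
  obtain ⟨hα0, hα2⟩ := hα
  have h1α : 0 < 1 - α := by linarith
  by_contra hcon
  push_neg at hcon
  set F : Finset (Fin m) := {j | ε ≤ ‖p j - ω‖} with hF
  -- hcon : (F.card : ℝ) < α * m
  have hm : 0 < m := by
    rcases Nat.eq_zero_or_pos m with h | h
    · subst h
      have h0 : (0:ℝ) ≤ (F.card : ℝ) := by positivity
      push_cast at hcon; nlinarith
    · exact h
  have hmR : (0:ℝ) < m := by exact_mod_cast hm
  have hKm : ((Fᶜ : Finset (Fin m)).card : ℝ) ≤ m := by
    have h := Finset.card_le_univ (Fᶜ : Finset (Fin m))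
    calc ((Fᶜ : Finset (Fin m)).card : ℝ) ≤ (Finset.univ : Finset (Fin m)).card := by
          exact_mod_cast h
      _ = m := by simp
  have hJcard : ((Fᶜ : Finset (Fin m)).card : ℝ) = m - F.card := by
    rw [Finset.card_compl, Nat.cast_sub (by simpa using Finset.card_le_univ F)]
    simp
  set d := ‖ω - pstar‖ with hdDef
  have hC1 : 1 < (1 - α) / Real.sqrt (1 - 2*α) := one_lt_Calpha hα0 hα2
  have hdε : ε < d := by
    have h1 := mul_lt_mul_of_pos_left hC1 hε
    nlinarith [hfar]
  have hdpos : 0 < d := hε.trans hdε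
  set D := d - ε with hDdef
  have hD : 0 < D := by rw [hDdef]; linarith
  set u : H := d⁻¹ • (ω - pstar) with hu_def
  have hu : ‖u‖ = 1 := by
    rw [hu_def, norm_smul, norm_inv, Real.norm_eq_abs, abs_of_pos hdpos, ← hdDef,
      inv_mul_cancel₀ hdpos.ne']
  set γ := α/(1-α) with hγdef
  have hγ : 0 < γ := div_pos hα0 h1α
  have hγα : γ*(1-α) = α := by rw [hγdef]; field_simp
  set δ := ((Fᶜ : Finset (Fin m)).card : ℝ)*γ - F.card with hδdef
  have hδ : 0 < δ := by
    rw [hδdef, hJcard]; nlinarith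
  set t := min D (D*δ/m) with htdef
  have ht0 : 0 < t := lt_min hD (div_pos (mul_pos hD hδ) hmR)
  have htD : t ≤ D := min_le_left _ _
  have htm : t ≤ D*δ/m := min_le_right _ _
  -- far points lose at most t
  have hfarj : ∀ j ∈ F, ‖pstar + t•u - p j‖ ≤ ‖pstar - p j‖ + t := by
    intro j _
    have h1 : pstar + t•u - p j = (pstar - p j) + t•u := by
      rw [add_sub_right_comm]
    rw [h1]
    calc ‖(pstar - p j) + t•u‖ ≤ ‖pstar - p j‖ + ‖t•u‖ := norm_add_le _ _
    _ = ‖pstar - p j‖ + t := by rw [norm_smul, hu, Real.norm_eq_abs, abs_of_pos ht0, mul_one]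
  -- close points gain at least tγ - t²/(2D)
  have hclosej : ∀ j ∈ (Fᶜ : Finset (Fin m)),
      ‖pstar + t•u - p j‖ ≤ ‖pstar - p j‖ - (t*γ - t^2/(2*D)) := by
    intro j hj
    rw [Finset.mem_compl] at hj
    have hjs : ‖p j - ω‖ < ε := by
      by_contra hcon2
      exact hj (by simp [hF]; exact not_lt.mp hcon2)
    set s := ‖p j - ω‖ with hsdef
    set c' := ⟪ω - pstar, p j - ω⟫ with hc'def
    set c := d⁻¹ * c' with hcdef
    have hc'abs : |c'| ≤ d * s := by
      rw [hc'def, hdDef, hsdef]; exact abs_real_inner_le_norm (ω - pstar) (p j - ω)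
    have hcabs : |c| ≤ s := by
      rw [hcdef, abs_mul, abs_inv, abs_of_pos hdpos]
      calc d⁻¹ * |c'| ≤ d⁻¹ * (d*s) := by
            apply mul_le_mul_of_nonneg_left hc'abs (by positivity)
        _ = s := by field_simp
    have hdc : 2*(d*c) = 2*c' := by rw [hcdef]; field_simp
    have hf0sq : ‖pstar - p j‖^2 = d^2 + 2*(d*c) + s^2 := by
      have h1 : pstar - p j = -((ω - pstar) + (p j - ω)) := by abel
      rw [h1, norm_neg, norm_add_sq_real, ← hdDef, ← hsdef, ← hc'def, hdc]
    have hinn : ⟪pstar - p j, u⟫ = -(d + c) := by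
      rw [hu_def, real_inner_smul_right]
      have h2 : ⟪pstar - p j, ω - pstar⟫ = -(d^2 + c') := by
        have h3 : pstar - p j = -(ω - pstar) - (p j - ω) := by abel
        rw [h3, inner_sub_left, inner_neg_left, real_inner_self_eq_norm_sq, ← hdDef,
          real_inner_comm, ← hc'def]
        ring
      rw [h2, hcdef]
      field_simp
    have hftsq : ‖pstar + t•u - p j‖^2 = ‖pstar - p j‖^2 - 2*(t*(d+c)) + t^2 := by
      have h1 : pstar + t•u - p j = (pstar - p j) + t•u := by rw [add_sub_right_comm]
      rw [h1, norm_add_sq_real, real_inner_smul_right, hinn, norm_smul, hu,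
        Real.norm_eq_abs, abs_of_pos ht0]
      ring
    have hgain := real_gain α ε d s c t (‖pstar - p j‖) (‖pstar + t•u - p j‖)
      hα0 hα2 hε (norm_nonneg _) hjs hcabs hfar (norm_nonneg _) (norm_nonneg _)
      hf0sq hftsq ht0 (by rw [← hDdef]; exact htD)
    rw [← hDdef] at hgain
    linarith
  -- sum the bounds
  have hfarsum : ∑ j ∈ F, ‖pstar + t•u - p j‖ ≤ (∑ j ∈ F, ‖pstar - p j‖) + F.card * t := by
    calc ∑ j ∈ F, ‖pstar + t•u - p j‖ ≤ ∑ j ∈ F, (‖pstar - p j‖ + t) :=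
          Finset.sum_le_sum hfarj
      _ = _ := by rw [Finset.sum_add_distrib, Finset.sum_const, nsmul_eq_mul]
  have hclosesum : ∑ j ∈ (Fᶜ : Finset (Fin m)), ‖pstar + t•u - p j‖ ≤
      (∑ j ∈ (Fᶜ : Finset (Fin m)), ‖pstar - p j‖)
        - (Fᶜ : Finset (Fin m)).card * (t*γ - t^2/(2*D)) := by
    calc ∑ j ∈ (Fᶜ : Finset (Fin m)), ‖pstar + t•u - p j‖
        ≤ ∑ j ∈ (Fᶜ : Finset (Fin m)), (‖pstar - p j‖ - (t*γ - t^2/(2*D))) :=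
          Finset.sum_le_sum hclosej
      _ = _ := by rw [Finset.sum_sub_distrib, Finset.sum_const, nsmul_eq_mul]
  have hmed' := hmed (pstar + t•u)
  have hs1 := Finset.sum_add_sum_compl F (fun j => ‖pstar + t•u - p j‖)
  have hs2 := Finset.sum_add_sum_compl F (fun j => ‖pstar - p j‖)
  have hA : ((Fᶜ : Finset (Fin m)).card : ℝ)*(t*γ - t^2/(2*D)) ≤ (F.card : ℝ) * t := by
    linarith
  -- final contradiction
  have h_tm : t*m ≤ D*δ := by
    rw [le_div_iff₀ hmR] at htm; linarith
  have hKγ : ((Fᶜ : Finset (Fin m)).card : ℝ)*γ = F.card + δ := by rw [hδdef]; ring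
  have hA3 : ((F.card:ℝ)+δ)*t - ((Fᶜ : Finset (Fin m)).card : ℝ)*(t^2/(2*D)) ≤ F.card * t := by
    have heq : ((F.card:ℝ)+δ)*t - ((Fᶜ : Finset (Fin m)).card : ℝ)*(t^2/(2*D))
        = ((Fᶜ : Finset (Fin m)).card : ℝ)*(t*γ - t^2/(2*D)) := by rw [← hKγ]; ring
    rw [heq]; exact hA
  have q1 : t*(t*(m:ℝ)) ≤ t*(D*δ) := mul_le_mul_of_nonneg_left h_tm ht0.le
  have q2 : (m:ℝ)*(t^2/(2*D)) ≤ t*δ/2 := by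
    have heq2 : t*(D*δ)/(2*D) = t*δ/2 := by field_simp
    calc (m:ℝ)*(t^2/(2*D)) = (t*(t*(m:ℝ)))/(2*D) := by ring
      _ ≤ (t*(D*δ))/(2*D) := by gcongr
      _ = t*δ/2 := heq2
  have q3 : ((Fᶜ : Finset (Fin m)).card : ℝ)*(t^2/(2*D)) ≤ (m:ℝ)*(t^2/(2*D)) :=
    mul_le_mul_of_nonneg_right hKm (by positivity)
  nlinarith [mul_pos hδ ht0]
end

section
/- Let H be a real inner product space, let p₁,…,p_m ∈ H, and let γ : [0,1] → H be a curve with right derivative v at 0, i.e. (γ(t)−γ(0))/t → v as t → 0⁺. Define L(x) := ∑_{j=1}^m ‖x−p_j‖. Then the one-sided limit lim_{t→0⁺} (L(γ(t)) − L(γ(0)))/t exists and equals ∑_{j : p_j ≠ γ(0)} ⟨v, γ(0)−p_j⟩/‖γ(0)−p_j‖ + ‖v‖ · #{j : p_j = γ(0)}. -/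
open scoped Classical

private lemma hasFDerivAt_norm_aux {H : Type*} [NormedAddCommGroup H]
    [InnerProductSpace ℝ H] {x : H} (hx : x ≠ 0) :
    HasFDerivAt (‖·‖) (‖x‖⁻¹ • innerSL ℝ x) x := by
  have h1 : HasFDerivAt (fun y : H => ‖y‖ ^ 2) (2 • innerSL ℝ x) x :=
    (hasStrictFDerivAt_norm_sq x).hasFDerivAt
  have hx2 : ‖x‖ ^ 2 ≠ 0 := pow_ne_zero 2 (norm_ne_zero_iff.mpr hx)
  have h2 := (Real.hasDerivAt_sqrt hx2).comp_hasFDerivAt x h1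
  simp only [Function.comp_def] at h2
  have heq : (fun y : H => Real.sqrt (‖y‖ ^ 2)) = fun y => ‖y‖ := by
    funext y; rw [Real.sqrt_sq (norm_nonneg y)]
  rw [heq] at h2
  refine h2.congr_fderiv ?_
  ext y
  simp [Real.sqrt_sq (norm_nonneg x), ContinuousLinearMap.smul_apply]
  ring

open Finset in
/-- First-variation formula for the sum-of-distances objective along a curve with a
right derivative at `0`, in a real inner product space. -/
theorem first_variation_sum_of_distances
    {H : Type*} [NormedAddCommGroup H] [InnerProductSpace ℝ H]
    (m : ℕ) (p : Fin m → H) (γ : ℝ → H) (v : H)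
    (hγ' : Filter.Tendsto (fun t : ℝ => t⁻¹ • (γ t - γ 0))
      (nhdsWithin 0 (Set.Ioi 0)) (nhds v)) :
    Filter.Tendsto
      (fun t : ℝ => ((∑ j, ‖γ t - p j‖) - ∑ j, ‖γ 0 - p j‖) / t)
      (nhdsWithin 0 (Set.Ioi 0))
      (nhds (∑ j ∈ {j | p j ≠ γ 0}, (inner ℝ v (γ 0 - p j) : ℝ) / ‖γ 0 - p j‖
        + ‖v‖ * ({j | p j = γ 0} : Finset (Fin m)).card)) := by
  -- γ has right derivative v at 0
  have hγd : HasDerivWithinAt γ v (Set.Ioi 0) 0 := by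
    rw [hasDerivWithinAt_iff_tendsto_slope]
    have : Set.Ioi (0:ℝ) \ {0} = Set.Ioi 0 := by
      ext t; simp (config := {contextual := true}) [ne_of_gt]
    rw [this]
    refine hγ'.congr' ?_
    filter_upwards with t
    simp [slope_def_field, slope, vsub_eq_sub]
  -- per-term limits
  set c : Fin m → ℝ := fun j =>
    if p j = γ 0 then ‖v‖ else (inner ℝ v (γ 0 - p j) : ℝ) / ‖γ 0 - p j‖ with hc
  have hterm : ∀ j, Filter.Tendsto (fun t : ℝ => (‖γ t - p j‖ - ‖γ 0 - p j‖) / t)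
      (nhdsWithin 0 (Set.Ioi 0)) (nhds (c j)) := by
    intro j
    by_cases hj : p j = γ 0
    · have hnv : Filter.Tendsto (fun t : ℝ => ‖t⁻¹ • (γ t - γ 0)‖)
          (nhdsWithin 0 (Set.Ioi 0)) (nhds ‖v‖) := hγ'.norm
      rw [hc]; simp only [hj, if_pos rfl]
      refine hnv.congr' ?_
      filter_upwards [self_mem_nhdsWithin] with t ht
      have ht0 : (0:ℝ) < t := ht
      rw [sub_self, norm_zero, sub_zero, norm_smul, norm_inv, Real.norm_eq_abs,
        abs_of_pos ht0, div_eq_inv_mul]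
    · have hu : γ 0 - p j ≠ 0 := sub_ne_zero.mpr (Ne.symm hj)
      have hN : HasFDerivAt (fun y : H => ‖y - p j‖)
          (‖γ 0 - p j‖⁻¹ • innerSL ℝ (γ 0 - p j)) (γ 0) := by
        have h1 : HasFDerivAt (fun y : H => y - p j)
            (ContinuousLinearMap.id ℝ H) (γ 0) :=
          (hasFDerivAt_id (γ 0)).sub_const (p j)
        have := (hasFDerivAt_norm_aux hu).comp (γ 0) h1
        exact this.congr_fderiv (ContinuousLinearMap.comp_id _)
      have hcomp : HasDerivWithinAt (fun t : ℝ => ‖γ t - p j‖)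
          ((‖γ 0 - p j‖⁻¹ • innerSL ℝ (γ 0 - p j)) v) (Set.Ioi 0) 0 :=
        hN.comp_hasDerivWithinAt 0 hγd
      rw [hasDerivWithinAt_iff_tendsto_slope] at hcomp
      have hset : Set.Ioi (0:ℝ) \ {0} = Set.Ioi 0 := by
        ext t; simp (config := {contextual := true}) [ne_of_gt]
      rw [hset] at hcomp
      have hval : ((‖γ 0 - p j‖⁻¹ • innerSL ℝ (γ 0 - p j)) v)
          = (inner ℝ v (γ 0 - p j) : ℝ) / ‖γ 0 - p j‖ := by
        rw [ContinuousLinearMap.smul_apply, innerSL_apply_apply, real_inner_comm,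
          smul_eq_mul, div_eq_inv_mul]
      rw [hc]; simp only [if_neg hj]
      rw [← hval]
      refine hcomp.congr' ?_
      filter_upwards with t
      simp [slope_def_field, slope, vsub_eq_sub, div_eq_inv_mul]
  have hsum : Filter.Tendsto
      (fun t : ℝ => ∑ j, (‖γ t - p j‖ - ‖γ 0 - p j‖) / t)
      (nhdsWithin 0 (Set.Ioi 0)) (nhds (∑ j, c j)) :=
    tendsto_finset_sum _ fun j _ => hterm j
  have hfun : (fun t : ℝ => ((∑ j, ‖γ t - p j‖) - ∑ j, ‖γ 0 - p j‖) / t)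
      = fun t : ℝ => ∑ j, (‖γ t - p j‖ - ‖γ 0 - p j‖) / t := by
    funext t
    rw [← Finset.sum_sub_distrib, Finset.sum_div]
  have hconst : (∑ j, c j) =
      ∑ j ∈ {j | p j ≠ γ 0}, (inner ℝ v (γ 0 - p j) : ℝ) / ‖γ 0 - p j‖
        + ‖v‖ * ({j | p j = γ 0} : Finset (Fin m)).card := by
    rw [← Finset.sum_filter_add_sum_filter_not Finset.univ (fun j => p j ≠ γ 0) c]
    congr 1
    · refine Finset.sum_congr rfl fun j hj => ?_
      simp only [Finset.mem_filter] at hj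
      rw [hc]; simp [hj.2]
    · have hfe : Finset.univ.filter (fun j => ¬ p j ≠ γ 0)
          = ({j | p j = γ 0} : Finset (Fin m)) := by
        ext j; simp
      rw [hfe, Finset.sum_congr rfl (fun j hj => ?_), Finset.sum_const, nsmul_eq_mul, mul_comm]
      simp only [Finset.mem_filter] at hj
      rw [hc]; simp [hj.2]
  rw [hfun, ← hconst]
  exact hsum
end

section
/- Let (M,ρ) be a metric space, let μ ∈ M, and let μ₁,…,μ_m be independent M-valued random variables on a probability space. Let μ* be an M-valued random variable, let α ∈ (0,1), C > 0, ε > 0, and suppose that pointwise on the sample space the implication holds: if ρ(μ*,μ) > C·ε then the number of indices j with ρ(μ_j,μ) ≥ ε is at least α·m. Suppose moreover that P(ρ(μ_j,μ) ≥ ε) ≤ η for every j = 1,…,m, where 0 < η < α. Then P(ρ(μ*,μ) > C·ε) ≤ exp(−m·φ(α,η)), where φ(α,η) := (1−α)·log((1−α)/(1−η)) + α·log(α/η). -/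
open MeasureTheory ProbabilityTheory Finset Real in
/-- Auxiliary: the Chernoff / binomial tail bound used in Theorem 1. -/
theorem mom_aux_tail
    {Ω : Type*} [MeasureSpace Ω] [IsProbabilityMeasure (ℙ : Measure Ω)]
    (m : ℕ) (hm : 0 < m) (A : Fin m → Set Ω) (hA : ∀ j, MeasurableSet (A j))
    (hindep : ProbabilityTheory.iIndepFun
      (fun j => (A j).indicator (fun _ => (1:ℝ))) ℙ)
    (α : ℝ) (hα0 : 0 < α) (hα1 : α < 1)
    (η : ℝ) (hη : 0 < η) (hηα : η < α)
    (hconc : ∀ j, ℙ (A j) ≤ ENNReal.ofReal η) :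
    ℙ {x | α * m ≤ ∑ j, (A j).indicator (fun _ => (1:ℝ)) x} ≤
      ENNReal.ofReal (Real.exp (-(m : ℝ) *
        ((1 - α) * Real.log ((1 - α) / (1 - η)) + α * Real.log (α / η)))) := by
  have hη1 : η < 1 := hηα.trans hα1
  set X : Fin m → Ω → ℝ := fun j => (A j).indicator (fun _ => (1:ℝ)) with hX
  have hmX : ∀ j, Measurable (X j) := fun j => measurable_const.indicator (hA j)
  have h1η : (0:ℝ) < 1 - η := by linarith
  have h1α : (0:ℝ) < 1 - α := by linarith
  have harg : 1 ≤ α * (1 - η) / (η * (1 - α)) := by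
    rw [le_div_iff₀ (by positivity)]
    nlinarith
  set t : ℝ := Real.log (α * (1 - η) / (η * (1 - α))) with htdef
  have ht0 : 0 ≤ t := Real.log_nonneg harg
  have het : Real.exp t = α * (1 - η) / (η * (1 - α)) :=
    Real.exp_log (by positivity)
  -- rewrite exp (t * X j x) as a constant plus an indicator
  have hfun : ∀ j, (fun x => Real.exp (t * X j x))
      = fun x => 1 + (A j).indicator (fun _ => Real.exp t - 1) x := by
    intro j
    funext x
    by_cases h : x ∈ A j <;> simp [X, Set.indicator, h]
  have h_int : ∀ j, Integrable (fun x => Real.exp (t * X j x)) ℙ := by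
    intro j
    rw [hfun j]
    exact (integrable_const 1).add ((integrable_const _).indicator (hA j))
  -- the individual mgf bound
  set B : ℝ := (1 - η) / (1 - α) with hB
  have hB0 : 0 < B := by positivity
  have hmgf : ∀ j, mgf (X j) ℙ t ≤ B := by
    intro j
    have hp : (ℙ (A j)).toReal ≤ η := ENNReal.toReal_le_of_le_ofReal hη.le (hconc j)
    have : mgf (X j) ℙ t = 1 + (Real.exp t - 1) * (ℙ (A j)).toReal := by
      rw [mgf, hfun j, integral_add (integrable_const 1) ((integrable_const _).indicator (hA j)),
        integral_const, integral_indicator_const _ (hA j)]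
      simp only [measureReal_def, measure_univ, ENNReal.toReal_one, smul_eq_mul, one_mul, mul_one]
      ring
    rw [this]
    have h1 : 1 ≤ Real.exp t := Real.one_le_exp ht0
    have : (Real.exp t - 1) * (ℙ (A j)).toReal ≤ (Real.exp t - 1) * η :=
      mul_le_mul_of_nonneg_left hp (by linarith)
    have hBe : 1 + (Real.exp t - 1) * η = B := by
      rw [het, hB]
      field_simp
      ring
    linarith [this, hBe]
  -- Chernoff bound
  have hchern := measure_ge_le_exp_mul_mgf (μ := ℙ) (X := ∑ j, X j) (α * m) ht0
    (hindep.integrable_exp_mul_sum hmX (fun j _ => h_int j))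
  have hsum : (∑ j, X j) = fun x => ∑ j, X j x := by
    funext x; simp
  rw [hsum] at hchern
  have hprod : mgf (fun x => ∑ j, X j x) ℙ t ≤ B ^ m := by
    rw [← hsum, hindep.mgf_sum hmX]
    calc ∏ j, mgf (X j) ℙ t ≤ ∏ _j : Fin m, B :=
          Finset.prod_le_prod (fun j _ => mgf_nonneg) (fun j _ => hmgf j)
      _ = B ^ m := by simp
  have hfinal : Real.exp (-t * (α * m)) * B ^ m
      = Real.exp (-(m : ℝ) * ((1 - α) * Real.log ((1 - α) / (1 - η)) + α * Real.log (α / η))) := by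
    have hBpow : B ^ m = Real.exp ((m : ℝ) * Real.log B) := by
      rw [Real.exp_nat_mul, Real.exp_log hB0]
    rw [hBpow, ← Real.exp_add]
    congr 1
    have e1 : Real.log (α * (1 - η) / (η * (1 - α)))
        = Real.log α + Real.log (1 - η) - (Real.log η + Real.log (1 - α)) := by
      rw [Real.log_div (by positivity) (by positivity),
        Real.log_mul hα0.ne' h1η.ne', Real.log_mul hη.ne' h1α.ne']
    have e2 : Real.log ((1 - η) / (1 - α)) = Real.log (1 - η) - Real.log (1 - α) :=
      Real.log_div h1η.ne' h1α.ne'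
    have e3 : Real.log ((1 - α) / (1 - η)) = Real.log (1 - α) - Real.log (1 - η) :=
      Real.log_div h1α.ne' h1η.ne'
    have e4 : Real.log (α / η) = Real.log α - Real.log η := Real.log_div hα0.ne' hη.ne'
    rw [htdef, hB, e1, e2, e3, e4]
    ring
  have hb : (ℙ {x | α * m ≤ ∑ j, X j x}).toReal
      ≤ Real.exp (-(m : ℝ) * ((1 - α) * Real.log ((1 - α) / (1 - η)) + α * Real.log (α / η))) := by
    refine hchern.trans ?_
    rw [← hfinal]
    exact mul_le_mul_of_nonneg_left hprod (Real.exp_nonneg _)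
  calc ℙ {x | α * m ≤ ∑ j, X j x}
      = ENNReal.ofReal ((ℙ {x | α * m ≤ ∑ j, X j x}).toReal) := by
        rw [ENNReal.ofReal_toReal (measure_ne_top _ _)]
    _ ≤ _ := ENNReal.ofReal_le_ofReal hb

open MeasureTheory ProbabilityTheory Finset in
/-- Probabilistic core of Theorem 1: exponential concentration of an estimator `μ*`
around `μ` from weakly concentrated independent estimators `μ₁,…,μ_m`. -/
theorem median_of_means_concentration
    {M : Type*} [MetricSpace M] [MeasurableSpace M] [BorelSpace M]
    {Ω : Type*} [MeasureSpace Ω] [IsProbabilityMeasure (ℙ : Measure Ω)]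
    (m : ℕ) (μs : Fin m → Ω → M) (hmeas : ∀ j, Measurable (μs j))
    (hindep : ProbabilityTheory.iIndepFun μs ℙ)
    (μ : M) (μstar : Ω → M) (hmeasstar : Measurable μstar)
    (α : ℝ) (hα : α ∈ Set.Ioo (0 : ℝ) 1) (C ε : ℝ) (hC : 0 < C) (hε : 0 < ε)
    (himp : ∀ x : Ω, C * ε < dist (μstar x) μ →
      α * m ≤ (({j | ε ≤ dist (μs j x) μ} : Finset (Fin m)).card : ℝ))
    (η : ℝ) (hη : 0 < η) (hηα : η < α)
    (hconc : ∀ j, ℙ {x | ε ≤ dist (μs j x) μ} ≤ ENNReal.ofReal η) :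
    ℙ {x | C * ε < dist (μstar x) μ} ≤
      ENNReal.ofReal (Real.exp (-(m : ℝ) *
        ((1 - α) * Real.log ((1 - α) / (1 - η)) + α * Real.log (α / η)))) := by
  obtain ⟨hα0, hα1⟩ := hα
  rcases Nat.eq_zero_or_pos m with hm | hm
  · subst hm
    calc ℙ {x | C * ε < dist (μstar x) μ} ≤ 1 := prob_le_one
      _ ≤ _ := by simp
  set A : Fin m → Set Ω := fun j => {x | ε ≤ dist (μs j x) μ} with hAdef
  have hMS : MeasurableSet {y : M | ε ≤ dist y μ} :=
    (isClosed_le continuous_const ((continuous_id.dist continuous_const))).measurableSet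
  have hA : ∀ j, MeasurableSet (A j) := fun j => (hmeas j) hMS
  have hindepA : ProbabilityTheory.iIndepFun
      (fun j => (A j).indicator (fun _ => (1:ℝ))) ℙ := by
    have h := ProbabilityTheory.iIndepFun.comp hindep
      (fun _ => Set.indicator {y : M | ε ≤ dist y μ} (fun _ => (1:ℝ)))
      (fun _ => (measurable_const.indicator hMS))
    convert h using 2 with j
    rfl
  have key := mom_aux_tail m hm A hA hindepA α hα0 hα1 η hη hηα hconc
  refine le_trans (measure_mono ?_) key
  intro x hx
  have h1 := himp x hx
  have : (∑ j, (A j).indicator (fun _ => (1:ℝ)) x)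
      = (({j | ε ≤ dist (μs j x) μ} : Finset (Fin m)).card : ℝ) := by
    rw [← Finset.sum_boole]
    refine Finset.sum_congr rfl fun j _ => ?_
    by_cases h : ε ≤ dist (μs j x) μ <;> simp [A, Set.indicator, h]
  simpa [this] using h1
end

section
/- Let p, q₁, q₂ be unit vectors in ℝ^{d+1} with 0 < ⟨p,q₁⟩ < 1 and 0 < ⟨p,q₂⟩ < 1 (i.e. q₁, q₂ lie in the open geodesic ball B(p, π/2) on the unit sphere S^d and differ from p). Then ‖log_p q₁ − log_p q₂‖ ≤ 2·arccos⟨q₁,q₂⟩, i.e. the spherical logarithm map log_p is 2-Lipschitz from B(p, π/2) to the tangent space T_p S^d. -/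
set_option maxHeartbeats 1600000


open Real

lemma key_scalar (α β t : ℝ) (hα0 : 0 < α) (hα : α < π/2) (hβ0 : 0 < β) (hβ : β < π/2)
    (htl : -1 ≤ t) (htu : t ≤ 1) :
    α^2 + β^2 - 2*α*β*t ≤
      4 * (Real.arccos (Real.cos α * Real.cos β + Real.sin α * Real.sin β * t))^2 := by
  have hpi : (3:ℝ) < π := by linarith [Real.pi_gt_three]
  have hpi4 : π ≤ 4 := by linarith [Real.pi_le_four]
  have hhalfpi : (1:ℝ)/2 ≤ 2/π := by
    rw [div_le_div_iff₀ (by norm_num) Real.pi_pos]; linarith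
  have hsa0 : 0 ≤ Real.sin α := Real.sin_nonneg_of_nonneg_of_le_pi hα0.le (by linarith)
  have hsb0 : 0 ≤ Real.sin β := Real.sin_nonneg_of_nonneg_of_le_pi hβ0.le (by linarith)
  have hsab : 0 ≤ Real.sin α * Real.sin β := mul_nonneg hsa0 hsb0
  obtain ⟨e, he⟩ : ∃ x, x = Real.cos α * Real.cos β + Real.sin α * Real.sin β * t := ⟨_, rfl⟩
  rw [← he]
  have he1 : e ≤ 1 := by
    nlinarith [Real.cos_le_one (α - β), Real.cos_sub α β]
  have he2 : -1 ≤ e := by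
    nlinarith [Real.neg_one_le_cos (α + β), Real.cos_add α β]
  obtain ⟨δ, hδ⟩ : ∃ x, x = Real.arccos e := ⟨_, rfl⟩
  rw [← hδ]
  have hδcos : Real.cos δ = e := by rw [hδ]; exact Real.cos_arccos he2 he1
  have hδ0 : 0 ≤ δ := hδ ▸ Real.arccos_nonneg e
  -- sin α ≥ α/2, sin β ≥ β/2
  have h2a : α/2 ≤ Real.sin α := by
    refine le_trans ?_ (Real.mul_le_sin hα0.le hα.le)
    calc α/2 = 1/2 * α := by ring
    _ ≤ 2/π * α := mul_le_mul_of_nonneg_right hhalfpi hα0.le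
  have h2b : β/2 ≤ Real.sin β := by
    refine le_trans ?_ (Real.mul_le_sin hβ0.le hβ.le)
    calc β/2 = 1/2 * β := by ring
    _ ≤ 2/π * β := mul_le_mul_of_nonneg_right hhalfpi hβ0.le
  -- 1 - cos (α - β) ≥ (α-β)^2/8
  have habs : |(α-β)/2| ≤ π/2 := by
    rw [abs_le]; constructor <;> nlinarith
  have hjo : |(α-β)/2| / 2 ≤ Real.sin |(α-β)/2| := by
    refine le_trans ?_ (Real.mul_le_sin (abs_nonneg _) habs)
    calc |(α-β)/2|/2 = 1/2 * |(α-β)/2| := by ring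
    _ ≤ 2/π * |(α-β)/2| := mul_le_mul_of_nonneg_right hhalfpi (abs_nonneg _)
  have hsq : (|(α-β)/2|/2)^2 ≤ Real.sin (|(α-β)/2|)^2 :=
    pow_le_pow_left₀ (by positivity) hjo 2
  have hss : Real.sin ((α-β)/2)^2 = Real.sin (|(α-β)/2|)^2 := by
    rcases le_or_gt 0 ((α-β)/2) with h | h
    · rw [abs_of_nonneg h]
    · rw [abs_of_neg h, Real.sin_neg]; ring
  have hhalf1 : Real.sin ((α-β)/2)^2 = 1/2 - Real.cos (α - β)/2 := by
    have h := Real.sin_sq_eq_half_sub ((α-β)/2)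
    rw [show 2*((α-β)/2) = α - β by ring] at h
    exact h
  have h1 : (α-β)^2/8 ≤ 1 - Real.cos (α - β) := by
    nlinarith [sq_abs ((α-β)/2)]
  -- 1 - cos δ ≤ δ^2/2
  have hδhalf : Real.sin (δ/2)^2 = 1/2 - Real.cos δ/2 := by
    have h := Real.sin_sq_eq_half_sub (δ/2)
    rw [show 2*(δ/2) = δ by ring] at h
    exact h
  have hsinδ : Real.sin (δ/2) ≤ δ/2 := Real.sin_le (by positivity)
  have hsinδ0 : 0 ≤ Real.sin (δ/2) :=
    Real.sin_nonneg_of_nonneg_of_le_pi (by positivity)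
      (by have := Real.arccos_le_pi e; rw [← hδ] at this; linarith)
  have h3 : 1 - Real.cos δ ≤ δ^2/2 := by nlinarith
  -- combine
  have hcomb : 1 - Real.cos δ = (1 - Real.cos (α - β)) + Real.sin α * Real.sin β * (1 - t) := by
    rw [hδcos, he, Real.cos_sub]; ring
  have h4' : α/2*(β/2) ≤ Real.sin α * Real.sin β := mul_le_mul h2a h2b (by positivity) hsa0
  have h4 : α*β ≤ 4*(Real.sin α * Real.sin β) := by linarith
  have h5 : α*β*(1-t) ≤ 4*(Real.sin α * Real.sin β)*(1-t) :=
    mul_le_mul_of_nonneg_right h4 (by linarith)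
  have h5' : α*β - α*β*t ≤ 4*(Real.sin α * Real.sin β) - 4*(Real.sin α * Real.sin β)*t := by
    linarith [h5]
  have hcomb' : Real.sin α * Real.sin β - Real.sin α * Real.sin β * t
      = Real.cos (α - β) - Real.cos δ := by linarith [hcomb]
  linarith [h1, h3, h5']


open scoped RealInnerProductSpace
open Real

lemma sphere_log_aux {E : Type*} [NormedAddCommGroup E] [InnerProductSpace ℝ E]
    (p q₁ q₂ : E) (a b c : ℝ) (hp : ‖p‖ = 1) (hq₁ : ‖q₁‖ = 1) (hq₂ : ‖q₂‖ = 1)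
    (hA : ⟪p, q₁⟫ = a) (hB : ⟪p, q₂⟫ = b) (hC : ⟪q₁, q₂⟫ = c)
    (ha0 : 0 < a) (ha1 : a < 1) (hb0 : 0 < b) (hb1 : b < 1)
    (key : ∀ α β t : ℝ, 0 < α → α < π/2 → 0 < β → β < π/2 → -1 ≤ t → t ≤ 1 →
      α^2 + β^2 - 2*α*β*t ≤
        4 * (Real.arccos (Real.cos α * Real.cos β + Real.sin α * Real.sin β * t))^2) :
    ‖(Real.arccos a / Real.sqrt (1 - a ^ 2)) • (q₁ - a • p)
      - (Real.arccos b / Real.sqrt (1 - b ^ 2)) • (q₂ - b • p)‖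
      ≤ 2 * Real.arccos c := by
  have ha2 : (0:ℝ) < 1 - a^2 := by nlinarith
  have hb2 : (0:ℝ) < 1 - b^2 := by nlinarith
  set s₁ := Real.sqrt (1 - a^2) with hs₁
  set s₂ := Real.sqrt (1 - b^2) with hs₂
  have hs₁0 : 0 < s₁ := Real.sqrt_pos.2 ha2
  have hs₂0 : 0 < s₂ := Real.sqrt_pos.2 hb2
  set α := Real.arccos a with hα
  set β := Real.arccos b with hβ
  have hα0 : 0 < α := Real.arccos_pos.2 ha1
  have hαlt : α < π/2 := Real.arccos_lt_pi_div_two.2 ha0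
  have hβ0 : 0 < β := Real.arccos_pos.2 hb1
  have hβlt : β < π/2 := Real.arccos_lt_pi_div_two.2 hb0
  have hcosα : Real.cos α = a := Real.cos_arccos (by linarith) ha1.le
  have hcosβ : Real.cos β = b := Real.cos_arccos (by linarith) hb1.le
  have hsinα : Real.sin α = s₁ := Real.sin_arccos a
  have hsinβ : Real.sin β = s₂ := Real.sin_arccos b
  have hip1 : ⟪q₁, p⟫ = a := by rw [real_inner_comm]; exact hA
  have hip2 : ⟪q₂, p⟫ = b := by rw [real_inner_comm]; exact hB
  -- norms of tangent components
  have hw1 : ‖q₁ - a • p‖^2 = 1 - a^2 := by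
    rw [norm_sub_sq_real, real_inner_smul_right, hip1, norm_smul, hp, hq₁, Real.norm_eq_abs,
      mul_one, sq_abs]
    ring
  have hw2 : ‖q₂ - b • p‖^2 = 1 - b^2 := by
    rw [norm_sub_sq_real, real_inner_smul_right, hip2, norm_smul, hp, hq₂, Real.norm_eq_abs,
      mul_one, sq_abs]
    ring
  have hw1n : ‖q₁ - a • p‖ = s₁ := by
    rw [hs₁, ← hw1, Real.sqrt_sq (norm_nonneg _)]
  have hw2n : ‖q₂ - b • p‖ = s₂ := by
    rw [hs₂, ← hw2, Real.sqrt_sq (norm_nonneg _)]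
  have hinner12 : ⟪q₁ - a • p, q₂ - b • p⟫ = c - a*b := by
    simp only [inner_sub_left, inner_sub_right, real_inner_smul_left, real_inner_smul_right,
      real_inner_self_eq_norm_sq, hC, hip1, hB, hp]
    ring
  set t := (c - a*b)/(s₁*s₂) with ht
  have habs : |c - a*b| ≤ s₁ * s₂ := by
    have h := abs_real_inner_le_norm (q₁ - a • p) (q₂ - b • p)
    rwa [hinner12, hw1n, hw2n] at h
  have hs12 : 0 < s₁ * s₂ := mul_pos hs₁0 hs₂0
  have htl : -1 ≤ t := by
    rw [ht, le_div_iff₀ hs12]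
    have h := abs_le.1 habs
    linarith [h.1]
  have htu : t ≤ 1 := by
    rw [ht, div_le_one hs12]
    have h := abs_le.1 habs
    linarith [h.2]
  have hexpr : Real.cos α * Real.cos β + Real.sin α * Real.sin β * t = c := by
    rw [hcosα, hcosβ, hsinα, hsinβ, ht]
    field_simp
    ring
  have hkey := key α β t hα0 hαlt hβ0 hβlt htl htu
  rw [hexpr] at hkey
  -- norm computation
  have hnormsq : ‖(α / s₁) • (q₁ - a • p) - (β / s₂) • (q₂ - b • p)‖^2
      = α^2 + β^2 - 2*α*β*t := by
    rw [norm_sub_sq_real, norm_smul, norm_smul, real_inner_smul_left, real_inner_smul_right,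
      hinner12, hw1n, hw2n, Real.norm_eq_abs, Real.norm_eq_abs,
      abs_of_pos (div_pos hα0 hs₁0), abs_of_pos (div_pos hβ0 hs₂0), ht]
    field_simp
    ring
  have harccos0 : 0 ≤ Real.arccos c := Real.arccos_nonneg c
  have hfinal : ‖(α / s₁) • (q₁ - a • p) - (β / s₂) • (q₂ - b • p)‖^2
      ≤ (2 * Real.arccos c)^2 := by
    rw [hnormsq]
    calc α^2 + β^2 - 2*α*β*t ≤ 4 * (Real.arccos c)^2 := hkey
    _ = (2 * Real.arccos c)^2 := by ring
  exact le_of_pow_le_pow_left₀ two_ne_zero (by linarith) hfinal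

open Real in
/-- Proposition 1: the spherical logarithm map `log_p` is 2-Lipschitz from the open
geodesic ball `B(p, π/2)` on `S^d` to the tangent space `T_p S^d`. -/
theorem sphere_log_two_lipschitz
    (d : ℕ) (p q₁ q₂ : EuclideanSpace ℝ (Fin (d + 1)))
    (hp : ‖p‖ = 1) (hq₁ : ‖q₁‖ = 1) (hq₂ : ‖q₂‖ = 1)
    (h₁ : ⟪p, q₁⟫ ∈ Set.Ioo (0 : ℝ) 1) (h₂ : ⟪p, q₂⟫ ∈ Set.Ioo (0 : ℝ) 1) :
    ‖(Real.arccos ⟪p, q₁⟫ / Real.sqrt (1 - ⟪p, q₁⟫ ^ 2)) • (q₁ - ⟪p, q₁⟫ • p)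
      - (Real.arccos ⟪p, q₂⟫ / Real.sqrt (1 - ⟪p, q₂⟫ ^ 2)) • (q₂ - ⟪p, q₂⟫ • p)‖
      ≤ 2 * Real.arccos ⟪q₁, q₂⟫ :=
  sphere_log_aux p q₁ q₂ _ _ _ hp hq₁ hq₂ rfl rfl rfl h₁.1 h₁.2 h₂.1 h₂.2
    (fun α β t hα0 hα hβ0 hβ htl htu => key_scalar α β t hα0 hα hβ0 hβ htl htu)
end

section
/- For all a, b ∈ [0, π/2) and all φ ∈ [0, π], one has −1 ≤ cos a·cos b + sin a·sin b·cos φ ≤ 1 and a² + b² − 2ab·cos φ ≤ (2·arccos(cos a·cos b + sin a·sin b·cos φ))². -/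
open Real in
private lemma cos_eq_one_sub_two_sin_sq (x : ℝ) :
    Real.cos x = 1 - 2 * Real.sin (x / 2) ^ 2 := by
  have h := Real.cos_two_mul (x / 2)
  have h2 := Real.sin_sq_add_cos_sq (x / 2)
  have h3 : Real.cos (2 * (x / 2)) = Real.cos x := by ring_nf
  nlinarith [h3]

open Real in
private lemma sphere_log_aux_s7 (a b φ c : ℝ)
    (ha0 : 0 ≤ a) (ha1 : a < π / 2) (hb0 : 0 ≤ b) (hb1 : b < π / 2)
    (hφ0 : 0 ≤ φ) (hφ1 : φ ≤ π) (hc0 : 0 ≤ c) (hcπ : c ≤ π)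
    (hcos : Real.cos c = Real.cos a * Real.cos b + Real.sin a * Real.sin b * Real.cos φ) :
    a ^ 2 + b ^ 2 - 2 * a * b * Real.cos φ ≤ (2 * c) ^ 2 := by
  have hπ := Real.pi_pos
  have hsa : 0 ≤ Real.sin a := Real.sin_nonneg_of_nonneg_of_le_pi ha0 (by linarith)
  have hsb : 0 ≤ Real.sin b := Real.sin_nonneg_of_nonneg_of_le_pi hb0 (by linarith)
  have hcsub := Real.cos_sub a b
  have hS1 : Real.cos c = 1 - 2 * Real.sin (c / 2) ^ 2 := cos_eq_one_sub_two_sin_sq c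
  have hSφ : Real.cos φ = 1 - 2 * Real.sin (φ / 2) ^ 2 := cos_eq_one_sub_two_sin_sq φ
  have hSab : Real.cos (a - b) = 1 - 2 * Real.sin ((a - b) / 2) ^ 2 :=
    cos_eq_one_sub_two_sin_sq (a - b)
  have hsinle : Real.sin (c / 2) ≤ c / 2 := Real.sin_le (by linarith)
  have hsinc0 : 0 ≤ Real.sin (c / 2) :=
    Real.sin_nonneg_of_nonneg_of_le_pi (by linarith) (by linarith)
  have hkey : 2 * (1 - Real.cos c) ≤ c ^ 2 := by nlinarith [hsinle, hsinc0, hS1]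
  have hsina : 2 / π * a ≤ Real.sin a := Real.mul_le_sin ha0 (le_of_lt ha1)
  have hsinb : 2 / π * b ≤ Real.sin b := Real.mul_le_sin hb0 (le_of_lt hb1)
  have habs : |a - b| ≤ π / 2 := abs_sub_le_iff.mpr ⟨by linarith, by linarith⟩
  have habs0 : 0 ≤ |a - b| := abs_nonneg _
  have hsabs : 2 / π * (|a - b| / 2) ≤ Real.sin (|a - b| / 2) :=
    Real.mul_le_sin (by positivity) (by linarith)
  have hsq_eq : Real.sin (|a - b| / 2) ^ 2 = Real.sin ((a - b) / 2) ^ 2 := by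
    rcases abs_cases (a - b) with ⟨h, _⟩ | ⟨h, _⟩
    · rw [h]
    · rw [h, show -(a - b) / 2 = -((a - b) / 2) by ring, Real.sin_neg]; ring
  have hS1ge : (a - b) ^ 2 ≤ π ^ 2 * Real.sin ((a - b) / 2) ^ 2 := by
    rw [← hsq_eq]
    have h2 : (2 / π * (|a - b| / 2)) ^ 2 ≤ Real.sin (|a - b| / 2) ^ 2 :=
      pow_le_pow_left₀ (by positivity) hsabs 2
    calc (a - b) ^ 2 = π ^ 2 * (2 / π * (|a - b| / 2)) ^ 2 := by
          field_simp
          rw [sq_abs]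
      _ ≤ π ^ 2 * Real.sin (|a - b| / 2) ^ 2 :=
          mul_le_mul_of_nonneg_left h2 (sq_nonneg π)
  have hprod : 2 / π * a * (2 / π * b) ≤ Real.sin a * Real.sin b :=
    mul_le_mul hsina hsinb (by positivity) hsa
  have hprodS : 4 * a * b * Real.sin (φ / 2) ^ 2
      ≤ π ^ 2 * (Real.sin a * Real.sin b * Real.sin (φ / 2) ^ 2) := by
    have h := mul_le_mul_of_nonneg_right hprod (sq_nonneg (Real.sin (φ / 2)))
    have h' := mul_le_mul_of_nonneg_left h (sq_nonneg π)
    calc 4 * a * b * Real.sin (φ / 2) ^ 2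
        = π ^ 2 * (2 / π * a * (2 / π * b) * Real.sin (φ / 2) ^ 2) := by
          field_simp; ring
      _ ≤ π ^ 2 * (Real.sin a * Real.sin b * Real.sin (φ / 2) ^ 2) := h'
  have hπ16 : π ^ 2 ≤ 16 := by
    calc π ^ 2 ≤ 4 ^ 2 := pow_le_pow_left₀ hπ.le Real.pi_le_four 2
      _ = 16 := by norm_num
  have hone : 1 - Real.cos c = 2 * Real.sin ((a - b) / 2) ^ 2
      + 2 * (Real.sin a * Real.sin b) * Real.sin (φ / 2) ^ 2 := by
    rw [hcos, hSφ]; linear_combination hcsub - hSab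
  have h16T : π ^ 2 * Real.sin ((a - b) / 2) ^ 2 ≤ 16 * Real.sin ((a - b) / 2) ^ 2 :=
    mul_le_mul_of_nonneg_right hπ16 (sq_nonneg _)
  have hPS0 : 0 ≤ Real.sin a * Real.sin b * Real.sin (φ / 2) ^ 2 :=
    mul_nonneg (mul_nonneg hsa hsb) (sq_nonneg _)
  have h16PS : π ^ 2 * (Real.sin a * Real.sin b * Real.sin (φ / 2) ^ 2)
      ≤ 16 * (Real.sin a * Real.sin b * Real.sin (φ / 2) ^ 2) :=
    mul_le_mul_of_nonneg_right hπ16 hPS0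
  have hgoalrw : a ^ 2 + b ^ 2 - 2 * a * b * Real.cos φ
      = (a - b) ^ 2 + 4 * a * b * Real.sin (φ / 2) ^ 2 := by rw [hSφ]; ring
  have hsq : (2 * c) ^ 2 = 4 * c ^ 2 := by ring
  rw [hgoalrw, hsq]
  linarith [hkey, hone, hS1ge, hprodS, h16T, h16PS]

open Real in
/-- Scalar trigonometric inequality underlying Proposition 1 (2-Lipschitzness of the
spherical log map). -/
theorem sphere_log_scalar_inequality
    (a b φ : ℝ) (ha : a ∈ Set.Ico (0 : ℝ) (π / 2)) (hb : b ∈ Set.Ico (0 : ℝ) (π / 2))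
    (hφ : φ ∈ Set.Icc (0 : ℝ) π) :
    (-1 ≤ Real.cos a * Real.cos b + Real.sin a * Real.sin b * Real.cos φ ∧
      Real.cos a * Real.cos b + Real.sin a * Real.sin b * Real.cos φ ≤ 1) ∧
    a ^ 2 + b ^ 2 - 2 * a * b * Real.cos φ ≤
      (2 * Real.arccos (Real.cos a * Real.cos b + Real.sin a * Real.sin b * Real.cos φ)) ^ 2 := by
  obtain ⟨ha0, ha1⟩ := ha
  obtain ⟨hb0, hb1⟩ := hb
  obtain ⟨hφ0, hφ1⟩ := hφ
  have hπ := Real.pi_pos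
  have hsa : 0 ≤ Real.sin a := Real.sin_nonneg_of_nonneg_of_le_pi ha0 (by linarith)
  have hsb : 0 ≤ Real.sin b := Real.sin_nonneg_of_nonneg_of_le_pi hb0 (by linarith)
  have hElb : -1 ≤ Real.cos a * Real.cos b + Real.sin a * Real.sin b * Real.cos φ := by
    nlinarith [Real.cos_add a b, Real.neg_one_le_cos (a + b), Real.neg_one_le_cos φ,
      mul_nonneg hsa hsb]
  have hEub : Real.cos a * Real.cos b + Real.sin a * Real.sin b * Real.cos φ ≤ 1 := by
    nlinarith [Real.cos_sub a b, Real.cos_le_one (a - b), Real.cos_le_one φ,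
      mul_nonneg hsa hsb]
  refine ⟨⟨hElb, hEub⟩, ?_⟩
  exact sphere_log_aux_s7 a b φ _ ha0 ha1 hb0 hb1 hφ0 hφ1
    (Real.arccos_nonneg _) (Real.arccos_le_pi _) (Real.cos_arccos hElb hEub)
end

section
/- For all a, b ∈ [0, π/4) and all φ ∈ [0, π], one has 0 ≤ (cos a·cos b + sin a·sin b·cos φ)² + sin²a·sin²b·sin²φ ≤ 1 and a² + b² − 2ab·cos φ ≤ (2·arccos√((cos a·cos b + sin a·sin b·cos φ)² + sin²a·sin²b·sin²φ))². -/
open Real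

private theorem aux_sq_le (y : ℝ) (h1 : -(π/2) ≤ y) (h2 : y ≤ π/2) :
    y^2 ≤ 2 - 2 * Real.cos (2*y) := by
  have key : ∀ z : ℝ, 0 ≤ z → z ≤ π/2 → z^2 ≤ 2 - 2 * Real.cos (2*z) := by
    intro z hz0 hz
    have hs := Real.mul_le_sin hz0 hz
    have hpi : (3 : ℝ) < π := Real.pi_gt_three
    have hpi4 : π < 3.15 := Real.pi_lt_d2
    have hsnn : 0 ≤ Real.sin z := Real.sin_nonneg_of_nonneg_of_le_pi hz0 (by linarith)
    have h2s : z ≤ 2 * Real.sin z := by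
      have heq : 2 / π * z - z / 2 = z * (4 - π) / (2 * π) := by field_simp; ring
      nlinarith [div_nonneg (mul_nonneg hz0 (by linarith : (0:ℝ) ≤ 4 - π)) (by linarith : (0:ℝ) ≤ 2*π)]
    have hc : Real.cos (2*z) = 1 - 2 * Real.sin z ^ 2 := by
      rw [Real.cos_two_mul]
      nlinarith [Real.sin_sq_add_cos_sq z]
    rw [hc]; nlinarith
  rcases le_or_gt 0 y with hy | hy
  · exact key y hy h2
  · have := key (-y) (by linarith) (by linarith)
    have hc : Real.cos (2 * -y) = Real.cos (2*y) := by
      rw [show 2 * -y = -(2*y) by ring, Real.cos_neg]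
    nlinarith

set_option maxHeartbeats 1000000 in
open Real in
/-- Scalar trigonometric inequality underlying Proposition 2 (2-Lipschitzness of the
planar-shape-space log map). -/
theorem shape_space_log_scalar_inequality
    (a b φ : ℝ) (ha : a ∈ Set.Ico (0 : ℝ) (π / 4)) (hb : b ∈ Set.Ico (0 : ℝ) (π / 4))
    (hφ : φ ∈ Set.Icc (0 : ℝ) π) :
    (0 ≤ (Real.cos a * Real.cos b + Real.sin a * Real.sin b * Real.cos φ) ^ 2
        + Real.sin a ^ 2 * Real.sin b ^ 2 * Real.sin φ ^ 2 ∧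
      (Real.cos a * Real.cos b + Real.sin a * Real.sin b * Real.cos φ) ^ 2
        + Real.sin a ^ 2 * Real.sin b ^ 2 * Real.sin φ ^ 2 ≤ 1) ∧
    a ^ 2 + b ^ 2 - 2 * a * b * Real.cos φ ≤
      (2 * Real.arccos (Real.sqrt
        ((Real.cos a * Real.cos b + Real.sin a * Real.sin b * Real.cos φ) ^ 2
          + Real.sin a ^ 2 * Real.sin b ^ 2 * Real.sin φ ^ 2))) ^ 2 := by
  obtain ⟨ha0, ha4⟩ := ha
  obtain ⟨hb0, hb4⟩ := hb
  obtain ⟨hφ0, hφπ⟩ := hφ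
  have hpi : (3 : ℝ) < π := Real.pi_gt_three
  set E : ℝ := (Real.cos a * Real.cos b + Real.sin a * Real.sin b * Real.cos φ) ^ 2
      + Real.sin a ^ 2 * Real.sin b ^ 2 * Real.sin φ ^ 2 with hE
  have hpa := Real.sin_sq_add_cos_sq a
  have hpb := Real.sin_sq_add_cos_sq b
  have hpφ := Real.sin_sq_add_cos_sq φ
  have hsa : 0 ≤ Real.sin a := Real.sin_nonneg_of_nonneg_of_le_pi ha0 (by linarith)
  have hsb : 0 ≤ Real.sin b := Real.sin_nonneg_of_nonneg_of_le_pi hb0 (by linarith)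
  have hca : 0 < Real.cos a := Real.cos_pos_of_mem_Ioo ⟨by linarith, by linarith⟩
  have hcb : 0 < Real.cos b := Real.cos_pos_of_mem_Ioo ⟨by linarith, by linarith⟩
  have ht1 : Real.cos φ ≤ 1 := Real.cos_le_one φ
  have ht2 : -1 ≤ Real.cos φ := Real.neg_one_le_cos φ
  -- Part 1
  have hE0 : 0 ≤ E := by positivity
  have h1 : (Real.sin a^2 + Real.cos a^2) * (Real.sin b^2 + Real.cos b^2) = 1 := by
    rw [hpa, hpb]; ring
  have hsφ2 : Real.sin φ ^ 2 = 1 - Real.cos φ ^ 2 := by linarith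
  have hE1 : E ≤ 1 := by
    rw [hE, hsφ2]
    nlinarith [sq_nonneg (Real.sin a * Real.cos b - Real.cos a * Real.sin b),
      mul_nonneg (mul_nonneg (mul_nonneg (mul_nonneg hsa hca.le) hsb) hcb.le)
        (by linarith : (0:ℝ) ≤ 1 - Real.cos φ), h1]
  refine ⟨⟨hE0, hE1⟩, ?_⟩
  -- the double-angle point on the sphere
  set D : ℝ := Real.cos (2*a) * Real.cos (2*b) + Real.sin (2*a) * Real.sin (2*b) * Real.cos φ
    with hD
  have hDE : D = 2 * E - 1 := by
    rw [hD, hE, Real.cos_two_mul, Real.cos_two_mul, Real.sin_two_mul, Real.sin_two_mul]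
    linear_combination (-2*(1 - Real.cos a^2)) * hpb - 2*Real.sin b^2 * hpa
      - 2*Real.sin a^2*Real.sin b^2 * hpφ
  set c : ℝ := Real.arccos D with hc
  have hD1 : D ≤ 1 := by rw [hDE]; linarith
  have hD2 : -1 ≤ D := by rw [hDE]; linarith
  have hcosc : Real.cos c = D := Real.cos_arccos hD2 hD1
  have hc0 : 0 ≤ c := Real.arccos_nonneg D
  have hcπ : c ≤ π := Real.arccos_le_pi D
  -- arccos √E = c / 2
  have hhalf : Real.cos (c / 2) = Real.sqrt ((1 + Real.cos c) / 2) :=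
    Real.cos_half (by linarith) hcπ
  have hEeq : (1 + Real.cos c) / 2 = E := by rw [hcosc, hDE]; ring
  have harccos : Real.arccos (Real.sqrt E) = c / 2 := by
    rw [← hEeq, ← hhalf, Real.arccos_cos (by linarith) (by linarith)]
  rw [harccos]
  have hrhs : (2 * (c / 2)) ^ 2 = c ^ 2 := by ring
  rw [hrhs]
  -- endpoint inequalities
  have hP1 : (a - b)^2 ≤ 2 - 2 * (Real.cos (2*a) * Real.cos (2*b)
      + Real.sin (2*a) * Real.sin (2*b)) := by
    have := aux_sq_le (a - b) (by linarith) (by linarith)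
    have hcs : Real.cos (2*(a-b)) = Real.cos (2*a) * Real.cos (2*b)
        + Real.sin (2*a) * Real.sin (2*b) := by
      rw [show 2*(a-b) = 2*a - 2*b by ring, Real.cos_sub]
    linarith [hcs ▸ this]
  have hP2 : (a + b)^2 ≤ 2 - 2 * (Real.cos (2*a) * Real.cos (2*b)
      - Real.sin (2*a) * Real.sin (2*b)) := by
    have := aux_sq_le (a + b) (by linarith) (by linarith)
    have hcs : Real.cos (2*(a+b)) = Real.cos (2*a) * Real.cos (2*b)
        - Real.sin (2*a) * Real.sin (2*b) := by
      rw [show 2*(a+b) = 2*a + 2*b by ring, Real.cos_add]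
    linarith [hcs ▸ this]
  -- linear interpolation in cos φ
  have hstepA : a^2 + b^2 - 2*a*b*Real.cos φ ≤ 2 - 2 * D := by
    rw [hD]
    nlinarith [mul_nonneg (by linarith : (0:ℝ) ≤ 1 + Real.cos φ)
        (by linarith : (0:ℝ) ≤ 2 - 2 * (Real.cos (2*a) * Real.cos (2*b)
          + Real.sin (2*a) * Real.sin (2*b)) - (a-b)^2),
      mul_nonneg (by linarith : (0:ℝ) ≤ 1 - Real.cos φ)
        (by linarith : (0:ℝ) ≤ 2 - 2 * (Real.cos (2*a) * Real.cos (2*b)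
          - Real.sin (2*a) * Real.sin (2*b)) - (a+b)^2)]
  have hstepB : 2 - 2 * Real.cos c ≤ c ^ 2 := by
    have := Real.one_sub_sq_div_two_le_cos (x := c)
    linarith
  rw [hcosc] at hstepB
  linarith
end

section
/- Let a, q₁, q₂ be real symmetric positive definite n×n matrices, and define d(x,y) := ‖log(x^{−1/2}·y·x^{−1/2})‖_F for symmetric positive definite x, y. Then d(a^{−1/2}·q₁·a^{−1/2}, a^{−1/2}·q₂·a^{−1/2}) = d(q₁,q₂). -/
open Matrix
open scoped Classical

/-- The unique symmetric positive definite square root of a positive definite matrix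
(junk value `0` if none exists). -/
noncomputable def matSqrt {n : ℕ} (x : Matrix (Fin n) (Fin n) ℝ) : Matrix (Fin n) (Fin n) ℝ :=
  if h : ∃ s : Matrix (Fin n) (Fin n) ℝ, s.PosDef ∧ s * s = x then h.choose else 0

/-- The unique symmetric matrix logarithm of a positive definite matrix
(junk value `0` if none exists). -/
noncomputable def matLog {n : ℕ} (x : Matrix (Fin n) (Fin n) ℝ) : Matrix (Fin n) (Fin n) ℝ :=
  if h : ∃ L : Matrix (Fin n) (Fin n) ℝ, L.IsSymm ∧ NormedSpace.exp L = x then h.choose else 0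

/-- The Frobenius norm `‖X‖_F = √(trace(XᵀX))`. -/
noncomputable def fNorm {n : ℕ} (X : Matrix (Fin n) (Fin n) ℝ) : ℝ :=
  Real.sqrt (Matrix.trace (Xᵀ * X))

/-- The Fisher–Rao norm at base point `a`, `‖X‖_a = √(trace(a⁻¹Xa⁻¹X))`. -/
noncomputable def aNorm {n : ℕ} (a X : Matrix (Fin n) (Fin n) ℝ) : ℝ :=
  Real.sqrt (Matrix.trace (a⁻¹ * X * a⁻¹ * X))

/-- The Riemannian log map of the Fisher–Rao metric,
`log_a q = a^{1/2}·log(a^{−1/2}·q·a^{−1/2})·a^{1/2}`. -/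
noncomputable def riemLog {n : ℕ} (a q : Matrix (Fin n) (Fin n) ℝ) : Matrix (Fin n) (Fin n) ℝ :=
  matSqrt a * matLog ((matSqrt a)⁻¹ * q * (matSqrt a)⁻¹) * matSqrt a

/-- The Fisher–Rao geodesic distance `d(x,y) = ‖log(x^{−1/2}·y·x^{−1/2})‖_F` on `PD(n)`. -/
noncomputable def frDist {n : ℕ} (x y : Matrix (Fin n) (Fin n) ℝ) : ℝ :=
  fNorm (matLog ((matSqrt x)⁻¹ * y * (matSqrt x)⁻¹))

namespace FRAux

open Polynomial
open scoped MatrixOrder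

variable {n : ℕ}

lemma isSymm_of_isHermitian {A : Matrix (Fin n) (Fin n) ℝ} (h : A.IsHermitian) : A.IsSymm := by
  rw [Matrix.IsSymm, ← Matrix.conjTranspose_eq_transpose_of_trivial]
  exact h

lemma isHermitian_of_isSymm {A : Matrix (Fin n) (Fin n) ℝ} (h : A.IsSymm) : A.IsHermitian := by
  rw [Matrix.IsHermitian, Matrix.conjTranspose_eq_transpose_of_trivial]
  exact h

lemma posDef_conj {B Q : Matrix (Fin n) (Fin n) ℝ} (hQ : Q.PosDef) (hB : IsUnit B) :
    (Bᴴ * Q * B).PosDef := by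
  exact hQ.conjTranspose_mul_mul_same (Matrix.mulVec_injective_of_isUnit hB)

lemma posDef_of_posSemidef_isUnit {S : Matrix (Fin n) (Fin n) ℝ} (hS : S.PosSemidef)
    (h : IsUnit S) : S.PosDef := by
  exact hS.posDef_iff_isUnit.mpr h

lemma matSqrt_spec {a : Matrix (Fin n) (Fin n) ℝ} (ha : a.PosDef) :
    (matSqrt a).PosDef ∧ matSqrt a * matSqrt a = a := by
  have hex : ∃ s : Matrix (Fin n) (Fin n) ℝ, s.PosDef ∧ s * s = a := by
    refine ⟨CFC.sqrt a, ?_, CFC.sqrt_mul_sqrt_self a ha.posSemidef.nonneg⟩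
    refine posDef_of_posSemidef_isUnit (CFC.sqrt_nonneg a).posSemidef ?_
    rw [Matrix.isUnit_iff_isUnit_det, isUnit_iff_ne_zero]
    intro h0
    have h2 : (CFC.sqrt a).det * (CFC.sqrt a).det = a.det := by
      rw [← Matrix.det_mul, CFC.sqrt_mul_sqrt_self a ha.posSemidef.nonneg]
    rw [h0, mul_zero] at h2
    exact ha.det_pos.ne' h2.symm
  rw [matSqrt, dif_pos hex]
  exact hex.choose_spec

lemma exp_diag (v : Fin n → ℝ) :
    NormedSpace.exp (Matrix.diagonal v) = Matrix.diagonal fun i => Real.exp (v i) := by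
  rw [Matrix.exp_diagonal]
  have hv : NormedSpace.exp v = fun i => Real.exp (v i) := by
    funext i
    rw [Pi.coe_exp, Real.exp_eq_exp_ℝ]
  rw [hv]

lemma exp_conj_unitary {U : Matrix (Fin n) (Fin n) ℝ} (A : Matrix (Fin n) (Fin n) ℝ)
    (hU : U * star U = 1) :
    NormedSpace.exp (U * A * star U) = U * NormedSpace.exp A * star U := by
  have hinv : U⁻¹ = star U := Matrix.inv_eq_right_inv hU
  rw [← hinv, Matrix.exp_conj U A ((Matrix.isUnit_iff_isUnit_det _).mpr (Matrix.isUnit_det_of_right_inverse hU))]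

lemma spectral {A : Matrix (Fin n) (Fin n) ℝ} (hA : A.IsHermitian) :
    ∃ U : Matrix (Fin n) (Fin n) ℝ, U * star U = 1 ∧ star U * U = 1 ∧
      A = U * Matrix.diagonal hA.eigenvalues * star U := by
  refine ⟨hA.eigenvectorUnitary, ?_, ?_, ?_⟩
  · exact (Matrix.mem_unitaryGroup_iff).mp hA.eigenvectorUnitary.2
  · exact mul_eq_one_comm.mp ((Matrix.mem_unitaryGroup_iff).mp hA.eigenvectorUnitary.2)
  · have h := hA.spectral_theorem
    have hv : (RCLike.ofReal ∘ hA.eigenvalues : Fin n → ℝ) = hA.eigenvalues := by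
      funext i
      simp [RCLike.ofReal_real_eq_id]
    rw [hv] at h
    exact h

lemma charpoly_conj {U : Matrix (Fin n) (Fin n) ℝ} (A : Matrix (Fin n) (Fin n) ℝ)
    (hU : U * star U = 1) :
    (U * A * star U).charpoly = A.charpoly := by
  have hinv : U⁻¹ = star U := Matrix.inv_eq_right_inv hU
  have hUu : IsUnit U := (Matrix.isUnit_iff_isUnit_det _).mpr (Matrix.isUnit_det_of_right_inverse hU)
  rw [← hinv]
  set f : Matrix (Fin n) (Fin n) ℝ →+* Matrix (Fin n) (Fin n) (Polynomial ℝ) :=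
    (Polynomial.C : ℝ →+* Polynomial ℝ).mapMatrix with hf
  have h1 : U * U⁻¹ = 1 := by rw [hinv]; exact hU
  have hf1 : f U * f U⁻¹ = 1 := by rw [← _root_.map_mul, h1, _root_.map_one]
  have hfu : IsUnit (f U) := (Matrix.isUnit_iff_isUnit_det _).mpr (Matrix.isUnit_det_of_right_inverse hf1)
  have hfinv : (f U)⁻¹ = f U⁻¹ := Matrix.inv_eq_right_inv hf1
  have hcm : Matrix.charmatrix (U * A * U⁻¹) = f U * Matrix.charmatrix A * (f U)⁻¹ := by
    rw [hfinv]
    unfold Matrix.charmatrix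
    rw [_root_.map_mul, _root_.map_mul, Matrix.mul_sub, Matrix.sub_mul]
    congr 1
    have hs : (Matrix.scalar (Fin n)) (Polynomial.X : Polynomial ℝ)
        = (Polynomial.X : Polynomial ℝ) • (1 : Matrix (Fin n) (Fin n) (Polynomial ℝ)) := by
      rw [Matrix.smul_one_eq_diagonal]
      rfl
    rw [hs, mul_smul_comm, smul_mul_assoc, mul_one, ← _root_.map_mul, h1, _root_.map_one]
  rw [Matrix.charpoly, Matrix.charpoly, hcm, Matrix.det_conj hfu]

lemma fNorm_eq_of_exp {L : Matrix (Fin n) (Fin n) ℝ} (hL : L.IsSymm) :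
    fNorm L = Real.sqrt
      ((((NormedSpace.exp L).charpoly.roots).map fun r => Real.log r ^ 2).sum) := by
  have hH : L.IsHermitian := isHermitian_of_isSymm hL
  obtain ⟨U, hU1, hU2, hspec⟩ := spectral hH
  set μ := hH.eigenvalues with hμ
  have hexp : NormedSpace.exp L
      = U * Matrix.diagonal (fun i => Real.exp (μ i)) * star U := by
    rw [hspec, exp_conj_unitary _ hU1, exp_diag]
  have hchar : (NormedSpace.exp L).charpoly
      = ∏ i, (Polynomial.X - Polynomial.C (Real.exp (μ i))) := by
    rw [hexp, charpoly_conj _ hU1,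
      Matrix.charpoly_of_upperTriangular _ (Matrix.blockTriangular_diagonal _)]
    simp
  have hroots : (∏ i, (Polynomial.X - Polynomial.C (Real.exp (μ i)))).roots
      = (Finset.univ.val.map fun i => Real.exp (μ i)) := by
    have h := Polynomial.roots_multiset_prod_X_sub_C
      (Finset.univ.val.map fun i : Fin n => Real.exp (μ i))
    rw [Multiset.map_map] at h
    rw [Finset.prod_eq_multiset_prod]
    exact h
  have htr : Matrix.trace (Lᵀ * L) = ∑ i, μ i ^ 2 := by
    rw [hL.eq]
    conv_lhs => rw [hspec]
    set D := Matrix.diagonal μ with hD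
    have hDD : (U * D * star U) * (U * D * star U) = U * (D * D) * star U := by
      calc (U * D * star U) * (U * D * star U)
          = U * D * ((star U * U) * (D * star U)) := by
            simp only [Matrix.mul_assoc]
        _ = U * (D * D) * star U := by
            rw [hU2, one_mul]; simp only [Matrix.mul_assoc]
    rw [hDD, Matrix.trace_mul_cycle, ← Matrix.mul_assoc, hU2, one_mul, hD,
      Matrix.diagonal_mul_diagonal, Matrix.trace_diagonal]
    exact Finset.sum_congr rfl fun i _ => (sq (μ i)).symm
  rw [fNorm, htr, hchar, hroots, Multiset.map_map]
  have hfun : ((fun r => Real.log r ^ 2) ∘ fun i : Fin n => Real.exp (μ i))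
      = fun i => μ i ^ 2 := by
    funext i
    simp [Real.log_exp]
  rw [hfun, Finset.sum_eq_multiset_sum]

lemma exists_log {A : Matrix (Fin n) (Fin n) ℝ} (hA : A.PosDef) :
    ∃ L : Matrix (Fin n) (Fin n) ℝ, L.IsSymm ∧ NormedSpace.exp L = A := by
  obtain ⟨U, hU1, hU2, hspec⟩ := spectral hA.1
  refine ⟨U * Matrix.diagonal (fun i => Real.log (hA.1.eigenvalues i)) * star U, ?_, ?_⟩
  · apply isSymm_of_isHermitian
    have hd : (Matrix.diagonal fun i => Real.log (hA.1.eigenvalues i)).IsHermitian := by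
      apply isHermitian_of_isSymm
      rw [Matrix.IsSymm, Matrix.diagonal_transpose]
    rw [Matrix.star_eq_conjTranspose]
    exact Matrix.isHermitian_mul_mul_conjTranspose U hd
  · rw [exp_conj_unitary _ hU1, exp_diag]
    have hfun : (fun i => Real.exp (Real.log (hA.1.eigenvalues i))) = hA.1.eigenvalues := by
      funext i
      rw [Real.exp_log (hA.eigenvalues_pos i)]
    rw [hfun]
    exact hspec.symm

lemma matLog_spec {A : Matrix (Fin n) (Fin n) ℝ} (hA : A.PosDef) :
    (matLog A).IsSymm ∧ NormedSpace.exp (matLog A) = A := by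
  have hex := exists_log hA
  rw [matLog, dif_pos hex]
  exact hex.choose_spec

lemma frDist_charpoly {x y : Matrix (Fin n) (Fin n) ℝ}
    (hM : ((matSqrt x)⁻¹ * y * (matSqrt x)⁻¹).PosDef) :
    frDist x y = Real.sqrt
      ((((((matSqrt x)⁻¹ * y * (matSqrt x)⁻¹)).charpoly.roots).map
        fun r => Real.log r ^ 2).sum) := by
  obtain ⟨hsymm, hexp⟩ := matLog_spec hM
  rw [frDist, fNorm_eq_of_exp hsymm, hexp]

end FRAux

/-- Second step of the proof of Proposition 3: invariance of the Fisher–Rao geodesic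
distance on `PD(n)` under congruence by `a^{−1/2}`. -/
theorem fisherRao_dist_congruence_invariant
    (n : ℕ) (a q₁ q₂ : Matrix (Fin n) (Fin n) ℝ)
    (ha : a.PosDef) (hq₁ : q₁.PosDef) (hq₂ : q₂.PosDef) :
    frDist ((matSqrt a)⁻¹ * q₁ * (matSqrt a)⁻¹) ((matSqrt a)⁻¹ * q₂ * (matSqrt a)⁻¹)
      = frDist q₁ q₂ := by
  classical
  obtain ⟨hsa, hsa2⟩ := FRAux.matSqrt_spec ha
  set A := (matSqrt a)⁻¹ with hAdef
  have hApd : A.PosDef := hsa.inv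
  have hAH : Aᴴ = A := hApd.1
  have hAunit : IsUnit A := hApd.isUnit
  have hx : (A * q₁ * A).PosDef := by
    have h := FRAux.posDef_conj hq₁ hAunit
    rwa [hAH] at h
  have hy : (A * q₂ * A).PosDef := by
    have h := FRAux.posDef_conj hq₂ hAunit
    rwa [hAH] at h
  obtain ⟨hs, hs2⟩ := FRAux.matSqrt_spec hx
  obtain ⟨ht, ht2⟩ := FRAux.matSqrt_spec hq₁
  set s := matSqrt (A * q₁ * A) with hsdef
  set t := matSqrt q₁ with htdef
  have hsdet : IsUnit s.det := hs.det_pos.ne'.isUnit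
  have htdet : IsUnit t.det := ht.det_pos.ne'.isUnit
  have hsinv : s * s⁻¹ = 1 := Matrix.mul_nonsing_inv _ hsdet
  have hsinv' : s⁻¹ * s = 1 := Matrix.nonsing_inv_mul _ hsdet
  have htinv : t * t⁻¹ = 1 := Matrix.mul_nonsing_inv _ htdet
  have htinv' : t⁻¹ * t = 1 := Matrix.nonsing_inv_mul _ htdet
  have hsinvH : (s⁻¹)ᴴ = s⁻¹ := by rw [Matrix.conjTranspose_nonsing_inv, hs.1]
  have htinvH : (t⁻¹)ᴴ = t⁻¹ := by rw [Matrix.conjTranspose_nonsing_inv, ht.1]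
  have hM₁ : (s⁻¹ * (A * q₂ * A) * s⁻¹).PosDef := by
    have h := FRAux.posDef_conj hy hs.inv.isUnit
    rwa [hsinvH] at h
  have hM₂ : (t⁻¹ * q₂ * t⁻¹).PosDef := by
    have h := FRAux.posDef_conj hq₂ ht.inv.isUnit
    rwa [htinvH] at h
  -- the orthogonal matrix u
  set u := s⁻¹ * A * t with hudef
  have hAsymm : Aᵀ = A := (FRAux.isSymm_of_isHermitian hApd.1)
  have huT : uᵀ = t * A * s⁻¹ := by
    rw [hudef, Matrix.transpose_mul, Matrix.transpose_mul, hAsymm,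
      (FRAux.isSymm_of_isHermitian ht.1 : tᵀ = t),
      (by rw [Matrix.transpose_nonsing_inv,
        (FRAux.isSymm_of_isHermitian hs.1 : sᵀ = s)] : (s⁻¹)ᵀ = s⁻¹),
      Matrix.mul_assoc]
  have hustar : star u = t * A * s⁻¹ := by
    rw [Matrix.star_eq_conjTranspose, Matrix.conjTranspose_eq_transpose_of_trivial, huT]
  have huu : u * star u = 1 := by
    rw [hustar, hudef]
    have h1 : s⁻¹ * A * t * (t * A * s⁻¹) = s⁻¹ * (A * (t * t) * A) * s⁻¹ := by
      simp only [Matrix.mul_assoc]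
    rw [h1, ht2, ← hs2]
    calc s⁻¹ * (s * s) * s⁻¹ = (s⁻¹ * s) * (s * s⁻¹) := by simp only [Matrix.mul_assoc]
      _ = 1 := by rw [hsinv', hsinv, one_mul]
  have hconj : u * (t⁻¹ * q₂ * t⁻¹) * star u = s⁻¹ * (A * q₂ * A) * s⁻¹ := by
    rw [hustar, hudef]
    calc s⁻¹ * A * t * (t⁻¹ * q₂ * t⁻¹) * (t * A * s⁻¹)
        = s⁻¹ * (A * ((t * t⁻¹) * q₂ * (t⁻¹ * t)) * A) * s⁻¹ := by
          simp only [Matrix.mul_assoc]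
      _ = s⁻¹ * (A * q₂ * A) * s⁻¹ := by
          rw [htinv, htinv', one_mul, Matrix.mul_one]
  have hcharpoly : (s⁻¹ * (A * q₂ * A) * s⁻¹).charpoly = (t⁻¹ * q₂ * t⁻¹).charpoly := by
    rw [← hconj, FRAux.charpoly_conj _ huu]
  rw [FRAux.frDist_charpoly hM₁, FRAux.frDist_charpoly hM₂, hcharpoly]
end

section
/- Let p₁,…,p_m and ω be unit vectors in ℝ^{d+1}, and let p* be a unit vector satisfying ∑_{j=1}^m arccos⟨p*,p_j⟩ ≤ ∑_{j=1}^m arccos⟨p,p_j⟩ for every unit vector p (p* is an intrinsic geometric median of p₁,…,p_m on the sphere S^d). Assume ⟨p*,p_j⟩ > −1 for all j. Let α ∈ (0,1/2), let C_α := 2(1−α)/√(1−2α), let ε > 0, and assume arccos⟨ω,p*⟩ + ε < π/2. If arccos⟨ω,p*⟩ ≥ C_α·ε, then the number of indices j ∈ {1,…,m} with arccos⟨p_j,ω⟩ ≥ ε is at least α·m. -/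
open scoped RealInnerProductSpace

set_option maxHeartbeats 400000 in
open Real Finset in
/-- Lemma 1(b) instantiated on the unit sphere `S^d` with geodesic distance
`d_g(x,y) = arccos⟪x,y⟫`: concentration of points around the intrinsic geometric median. -/
theorem median_of_means_sphere_intrinsic
    (d : ℕ) (m : ℕ) (p : Fin m → EuclideanSpace ℝ (Fin (d + 1)))
    (hp : ∀ j, ‖p j‖ = 1)
    (ω : EuclideanSpace ℝ (Fin (d + 1))) (hω : ‖ω‖ = 1)
    (pstar : EuclideanSpace ℝ (Fin (d + 1))) (hpstar : ‖pstar‖ = 1)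
    (hmed : ∀ q : EuclideanSpace ℝ (Fin (d + 1)), ‖q‖ = 1 →
      ∑ j, Real.arccos ⟪pstar, p j⟫ ≤ ∑ j, Real.arccos ⟪q, p j⟫)
    (hne : ∀ j, -1 < ⟪pstar, p j⟫)
    (α : ℝ) (hα : α ∈ Set.Ioo (0 : ℝ) (1/2))
    (Cα : ℝ) (hCα : Cα = 2 * (1 - α) / Real.sqrt (1 - 2 * α))
    (ε : ℝ) (hε : 0 < ε)
    (hball : Real.arccos ⟪ω, pstar⟫ + ε < π / 2)
    (hfar : Cα * ε ≤ Real.arccos ⟪ω, pstar⟫) :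
    α * m ≤ (({j | ε ≤ Real.arccos ⟪p j, ω⟫} : Finset (Fin m)).card : ℝ) := by
  obtain ⟨hα0, hα2⟩ := hα
  have h2α : (0:ℝ) < 1 - 2*α := by linarith
  have h1α : (0:ℝ) < 1 - α := by linarith
  have h2α' : (1:ℝ) - 2*α ≠ 0 := ne_of_gt h2α
  have h1α' : (1:ℝ) - α ≠ 0 := ne_of_gt h1α
  have hsq2α : Real.sqrt (1 - 2*α) ^ 2 = 1 - 2*α := Real.sq_sqrt h2α.le
  have hsqpos : 0 < Real.sqrt (1 - 2*α) := Real.sqrt_pos.mpr h2α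
  have hsqle : Real.sqrt (1 - 2*α) ≤ 1 - α := by
    calc Real.sqrt (1 - 2*α) ≤ Real.sqrt ((1-α)^2) := Real.sqrt_le_sqrt (by nlinarith)
    _ = 1 - α := Real.sqrt_sq h1α.le
  have hCα2 : 2 ≤ Cα := by
    rw [hCα, le_div_iff₀ hsqpos]; linarith
  set a : ℝ := ⟪ω, pstar⟫ with ha
  set D : ℝ := Real.arccos a with hD
  have habs : |a| ≤ 1 := by
    rw [ha]; simpa [hω, hpstar] using abs_real_inner_le_norm ω pstar
  have hDpos : 0 < D := lt_of_lt_of_le (by nlinarith only [hCα2, hε]) hfar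
  have hcosD : Real.cos D = a := Real.cos_arccos (abs_le.mp habs).1 (abs_le.mp habs).2
  have hsinD : Real.sin D = Real.sqrt (1 - a^2) := Real.sin_arccos a
  have hDπ : D < π/2 := by linarith only [hball, hε]
  have hsinDpos : 0 < Real.sin D := Real.sin_pos_of_pos_of_lt_pi hDpos
    (by linarith only [hball, hε, Real.pi_pos])
  have hapos : 0 < a := Real.arccos_lt_pi_div_two.mp hDπ
  have hsinD2 : Real.sin D ^ 2 = 1 - a ^ 2 := by
    rw [hsinD]; exact Real.sq_sqrt (by nlinarith only [abs_le.mp habs])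
  -- the unit tangent direction from pstar towards ω
  obtain ⟨u, hu⟩ : ∃ u : EuclideanSpace ℝ (Fin (d+1)),
      u = (Real.sin D)⁻¹ • (ω - a • pstar) := ⟨_, rfl⟩
  have hsmul : Real.sin D • u = ω - a • pstar := by
    rw [hu]; exact smul_inv_smul₀ (ne_of_gt hsinDpos) _
  obtain ⟨c, hcdef⟩ : ∃ c : Fin m → ℝ, c = fun j => (⟪pstar, p j⟫ : ℝ) := ⟨_, rfl⟩
  obtain ⟨b, hbdef⟩ : ∃ b : Fin m → ℝ, b = fun j => (⟪ω, p j⟫ : ℝ) := ⟨_, rfl⟩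
  obtain ⟨s, hsdef⟩ : ∃ s : Fin m → ℝ, s = fun j => (⟪u, p j⟫ : ℝ) := ⟨_, rfl⟩
  have hc' : ∀ j, ⟪pstar, p j⟫ = c j := fun j => by rw [hcdef]
  have hb' : ∀ j, ⟪ω, p j⟫ = b j := fun j => by rw [hbdef]
  have hs' : ∀ j, ⟪u, p j⟫ = s j := fun j => by rw [hsdef]
  have hcp' : ∀ j, ⟪p j, pstar⟫ = c j := fun j => by rw [real_inner_comm, hc' j]
  have hbp' : ∀ j, ⟪p j, ω⟫ = b j := fun j => by rw [real_inner_comm, hb' j]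
  have hsu' : ∀ j, ⟪p j, u⟫ = s j := fun j => by rw [real_inner_comm, hs' j]
  have hpp : ∀ j, ⟪p j, p j⟫ = (1:ℝ) := fun j => by
    rw [real_inner_self_eq_norm_sq, hp j]; norm_num
  have hss : ⟪pstar, pstar⟫ = (1:ℝ) := by
    rw [real_inner_self_eq_norm_sq, hpstar]; norm_num
  have hωω : ⟪ω, ω⟫ = (1:ℝ) := by
    rw [real_inner_self_eq_norm_sq, hω]; norm_num
  have hws : ⟪pstar, ω⟫ = a := by rw [ha, real_inner_comm]
  have hsinD_s : ∀ j, Real.sin D * s j = b j - a * c j := by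
    intro j
    have h1 : ⟪Real.sin D • u, p j⟫ = ⟪ω - a • pstar, p j⟫ := by rw [hsmul]
    rw [real_inner_smul_left, inner_sub_left, real_inner_smul_left, hs' j, hb' j, hc' j] at h1
    exact h1
  have hup : ⟪u, pstar⟫ = (0:ℝ) := by
    have h1 : ⟪Real.sin D • u, pstar⟫ = ⟪ω - a • pstar, pstar⟫ := by rw [hsmul]
    rw [real_inner_smul_left, inner_sub_left, real_inner_smul_left, hss, ← ha] at h1
    have h2 : Real.sin D * ⟪u, pstar⟫ = 0 := by rw [h1]; ring
    exact (mul_eq_zero.mp h2).resolve_left (ne_of_gt hsinDpos)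
  have hpu0 : ⟪pstar, u⟫ = (0:ℝ) := by rw [real_inner_comm]; exact hup
  have huω : ⟪u, ω⟫ = Real.sin D := by
    have h1 : ⟪Real.sin D • u, ω⟫ = ⟪ω - a • pstar, ω⟫ := by rw [hsmul]
    rw [real_inner_smul_left, inner_sub_left, real_inner_smul_left, hws, hωω] at h1
    have h2 : Real.sin D * ⟪u, ω⟫ = Real.sin D * Real.sin D := by
      rw [h1]; linear_combination -hsinD2
    exact mul_left_cancel₀ (ne_of_gt hsinDpos) h2
  have huu : ⟪u, u⟫ = (1:ℝ) := by
    have h1 : ⟪Real.sin D • u, u⟫ = ⟪ω - a • pstar, u⟫ := by rw [hsmul]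
    rw [real_inner_smul_left, inner_sub_left, real_inner_smul_left,
      real_inner_comm u ω, huω, real_inner_comm u pstar, hup] at h1
    have h2 : Real.sin D * ⟪u, u⟫ = Real.sin D * 1 := by rw [h1]; ring
    exact mul_left_cancel₀ (ne_of_gt hsinDpos) h2
  have hbes : ∀ j, s j ^ 2 + c j ^ 2 ≤ 1 := by
    intro j
    have h0 : (0:ℝ) ≤ ⟪p j - c j • pstar - s j • u, p j - c j • pstar - s j • u⟫ :=
      real_inner_self_nonneg
    simp only [inner_sub_left, inner_sub_right, real_inner_smul_left, real_inner_smul_right,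
      hpp, hss, huu, hup, hpu0, hc', hcp', hs', hsu'] at h0
    nlinarith only [h0]
  have hcle : ∀ j, |c j| ≤ 1 := by
    intro j
    rw [← hc' j]; simpa [hpstar, hp j] using abs_real_inner_le_norm pstar (p j)
  have hble : ∀ j, |b j| ≤ 1 := by
    intro j
    rw [← hb' j]; simpa [hω, hp j] using abs_real_inner_le_norm ω (p j)
  -- the first-variation coefficients
  obtain ⟨l, hldef⟩ : ∃ l : Fin m → ℝ,
      l = fun j => if c j = 1 then (1:ℝ) else -(s j / Real.sqrt (1 - c j ^ 2)) := ⟨_, rfl⟩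
  -- norm of the comparison geodesic point
  have hγ : ∀ t : ℝ, ‖Real.cos t • pstar + Real.sin t • u‖ = 1 := by
    intro t
    have h1 : ⟪Real.cos t • pstar + Real.sin t • u,
        Real.cos t • pstar + Real.sin t • u⟫ = (1:ℝ) := by
      simp only [inner_add_left, inner_add_right, real_inner_smul_left, real_inner_smul_right,
        hss, huu, hup, hpu0]
      linear_combination Real.sin_sq_add_cos_sq t
    rw [norm_eq_sqrt_real_inner, h1, Real.sqrt_one]
  have hmin : ∀ t : ℝ, (∑ j, Real.arccos (c j)) ≤
      ∑ j, Real.arccos (Real.cos t * c j + Real.sin t * s j) := by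
    intro t
    have hq := hmed (Real.cos t • pstar + Real.sin t • u) (hγ t)
    simpa only [inner_add_left, real_inner_smul_left, hc', hs'] using hq
  -- Key 1: the first variation at pstar towards ω is nonnegative
  have hKey1 : 0 ≤ ∑ j, l j := by
    have hderiv : HasDerivWithinAt
        (fun t : ℝ => ∑ j, Real.arccos (Real.cos t * c j + Real.sin t * s j))
        (∑ j, l j) (Set.Ici (0:ℝ)) 0 := by
      apply HasDerivWithinAt.fun_sum
      intro j _
      by_cases hcj : c j = 1
      · have hpj : pstar = p j := (inner_eq_one_iff_of_norm_eq_one hpstar (hp j)).mp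
          (by rw [hc' j, hcj])
        have hsj0 : s j = 0 := by rw [← hs' j, ← hpj]; exact hup
        rw [hldef]; simp only [if_pos hcj, hcj, hsj0]
        have hid : HasDerivWithinAt (fun t : ℝ => t) 1 (Set.Ici (0:ℝ)) 0 :=
          (hasDerivAt_id 0).hasDerivWithinAt
        apply hid.congr_of_eventuallyEq ?_ (by simp)
        have hmem : Set.Icc (0:ℝ) π ∈ nhdsWithin 0 (Set.Ici (0:ℝ)) := by
          rw [← Set.Ici_inter_Iic]
          exact Filter.inter_mem self_mem_nhdsWithin
            (mem_nhdsWithin_of_mem_nhds (Iic_mem_nhds Real.pi_pos))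
        filter_upwards [hmem] with t ht
        simpa using Real.arccos_cos ht.1 ht.2
      · have hinner : HasDerivAt (fun t : ℝ => Real.cos t * c j + Real.sin t * s j) (s j) 0 := by
          have h1' := (Real.hasDerivAt_cos 0).mul_const (c j)
          have h2' := (Real.hasDerivAt_sin 0).mul_const (s j)
          simpa using h1'.fun_add h2'
        have harc : HasDerivAt Real.arccos (-(1 / Real.sqrt (1 - c j ^ 2)))
            ((fun t : ℝ => Real.cos t * c j + Real.sin t * s j) 0) := by
          simpa using Real.hasDerivAt_arccos (ne_of_gt (by rw [← hc' j]; exact hne j)) hcj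
        have hcomp := harc.comp 0 hinner
        have heq : l j = (-(1 / Real.sqrt (1 - c j ^ 2))) * s j := by
          rw [hldef]; simp only [if_neg hcj]; ring
        rw [heq]
        exact hcomp.hasDerivWithinAt
    rw [hasDerivWithinAt_iff_tendsto_slope, Set.Ici_sdiff_left] at hderiv
    refine ge_of_tendsto hderiv ?_
    refine Filter.eventually_of_mem self_mem_nhdsWithin fun t ht => ?_
    rw [slope_def_field]
    apply div_nonneg
    · have h1 := hmin t
      simp only [Real.cos_zero, Real.sin_zero, one_mul, zero_mul, add_zero]
      linarith only [h1]
    · simp only [sub_zero]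
      exact (le_of_lt ht)
  -- Key 2: each coefficient is at most 1
  have hKey2 : ∀ j, l j ≤ 1 := by
    intro j
    rw [hldef]
    by_cases h : c j = 1
    · simp [h]
    · simp only [if_neg h]
      have hlt : c j < 1 := lt_of_le_of_ne (abs_le.mp (hcle j)).2 h
      have hgt : -1 < c j := by rw [← hc' j]; exact hne j
      have hY : 0 < Real.sqrt (1 - c j ^ 2) := Real.sqrt_pos.mpr (by nlinarith only [hlt, hgt])
      have hY2 : Real.sqrt (1 - c j ^ 2) ^ 2 = 1 - c j ^ 2 := Real.sq_sqrt (by nlinarith only [hlt, hgt])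
      rw [neg_le, le_div_iff₀ hY]
      nlinarith only [hbes j, sq_nonneg (s j + Real.sqrt (1 - c j ^ 2)), hY2, hY]
  have hβpos : 0 < α / (1-α) := div_pos hα0 h1α
  have hεD : 2 * ε ≤ D := le_trans (by nlinarith only [hCα2, hε]) hfar
  -- Key 3: points close to ω have coefficient at most -α/(1-α)
  have hKey3 : ∀ j, Real.arccos (b j) < ε → l j ≤ -(α/(1-α)) := by
    intro j hej
    have hgt : -1 < c j := by rw [← hc' j]; exact hne j
    have hcj1 : c j < 1 := by
      rcases lt_or_eq_of_le (abs_le.mp (hcle j)).2 with h | h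
      · exact h
      · exfalso
        have hpj : pstar = p j := (inner_eq_one_iff_of_norm_eq_one hpstar (hp j)).mp
          (by rw [hc' j, h])
        have hbj : b j = a := by rw [← hb' j, ← hpj, ← ha]
        rw [hbj, ← hD] at hej
        linarith only [hej, hεD, hε]
    have hY : 0 < Real.sqrt (1 - c j ^ 2) := Real.sqrt_pos.mpr (by nlinarith only [hgt, hcj1])
    have hY2 : Real.sqrt (1 - c j ^ 2) ^ 2 = 1 - c j ^ 2 := Real.sq_sqrt (by nlinarith only [hgt, hcj1])
    have he0 : 0 ≤ Real.arccos (b j) := Real.arccos_nonneg _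
    have hb2nn : (0:ℝ) ≤ 1 - b j ^ 2 := by nlinarith only [abs_le.mp (hble j)]
    have hsinele : Real.sqrt (1 - b j ^ 2) < ε := by
      calc Real.sqrt (1 - b j ^ 2) = Real.sin (Real.arccos (b j)) := (Real.sin_arccos _).symm
      _ ≤ Real.arccos (b j) := Real.sin_le he0
      _ < ε := hej
    have hb2 : 1 - b j ^ 2 < ε ^ 2 := by
      nlinarith only [hsinele, Real.sqrt_nonneg (1 - b j ^ 2), Real.sq_sqrt hb2nn]
    have hbja : a < b j := by
      by_contra hcon
      push_neg at hcon
      rcases eq_or_lt_of_le hcon with h | h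
      · have hDe : D = Real.arccos (b j) := by rw [hD, h]
        linarith only [hDe, hej, hεD, hε]
      · have h1 := Real.strictAntiOn_arccos
          ⟨(abs_le.mp (hble j)).1, (abs_le.mp (hble j)).2⟩
          ⟨(abs_le.mp habs).1, (abs_le.mp habs).2⟩ h
        rw [← hD] at h1
        linarith only [h1, hej, hεD, hε]
    have hX2 : Real.sqrt (b j ^ 2 - a ^ 2) ^ 2 = b j ^ 2 - a ^ 2 :=
      Real.sq_sqrt (by nlinarith only [hbja, hapos])
    have hX0 : 0 ≤ Real.sqrt (b j ^ 2 - a ^ 2) := Real.sqrt_nonneg _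
    -- Cauchy–Schwarz in the plane: a * c j + X * Y ≤ b j
    have hcs : a * c j + Real.sqrt (b j ^ 2 - a ^ 2) * Real.sqrt (1 - c j ^ 2) ≤ b j := by
      nlinarith only [hX2, hY2, sq_nonneg (a * Real.sqrt (1 - c j ^ 2) -
        Real.sqrt (b j ^ 2 - a ^ 2) * c j), hbja, hapos,
        Real.sqrt_nonneg (1 - c j ^ 2), hX0]
    -- lower bound on sin D
    have hsinDeps : Cα * ε / 2 ≤ Real.sin D := by
      have h1 := Real.mul_le_sin hDpos.le hDπ.le
      have h2 := Real.pi_le_four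
      have hπ := Real.pi_pos
      rw [div_mul_eq_mul_div, div_le_iff₀ hπ] at h1
      nlinarith only [h1, h2, hπ, hfar, hε.le, hDpos.le, hsinDpos.le]
    have hCsq : Cα ^ 2 * (1 - 2*α) = 4 * (1-α) ^ 2 := by
      rw [hCα, div_pow, hsq2α]
      field_simp
      ring
    have hsD2 : (Cα * ε / 2) ^ 2 ≤ Real.sin D ^ 2 :=
      pow_le_pow_left₀ (by positivity) hsinDeps 2
    have hε2 : ε ^ 2 ≤ (1 - 2*α)/(1-α)^2 * Real.sin D ^ 2 := by
      have hid : (1 - 2*α)/(1-α)^2 * (Cα * ε / 2) ^ 2 = ε ^ 2 := by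
        field_simp
        nlinarith only [hCsq]
      calc ε ^ 2 = (1 - 2*α)/(1-α)^2 * (Cα * ε / 2) ^ 2 := hid.symm
      _ ≤ (1 - 2*α)/(1-α)^2 * Real.sin D ^ 2 :=
        mul_le_mul_of_nonneg_left hsD2 (by positivity)
    have hX2ge : (α/(1-α)) ^ 2 * Real.sin D ^ 2 ≤ Real.sqrt (b j ^ 2 - a ^ 2) ^ 2 := by
      have hXeq : Real.sqrt (b j ^ 2 - a ^ 2) ^ 2 = Real.sin D ^ 2 - (1 - b j ^ 2) := by
        rw [hX2, hsinD2]; ring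
      have hident : (α/(1-α)) ^ 2 * Real.sin D ^ 2
          = Real.sin D ^ 2 - (1 - 2*α)/(1-α)^2 * Real.sin D ^ 2 := by
        field_simp
        ring
      rw [hXeq, hident]
      linarith only [hε2, hb2]
    have hmain : α/(1-α) * Real.sin D ≤ Real.sqrt (b j ^ 2 - a ^ 2) := by
      nlinarith only [hX2ge, hX0, mul_pos hβpos hsinDpos]
    have hsY : α/(1-α) * Real.sqrt (1 - c j ^ 2) ≤ s j := by
      have h1 : Real.sqrt (b j ^ 2 - a ^ 2) * Real.sqrt (1 - c j ^ 2) ≤ Real.sin D * s j := by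
        rw [hsinD_s j]; linarith only [hcs]
      have h2 : (α/(1-α) * Real.sin D) * Real.sqrt (1 - c j ^ 2)
          ≤ Real.sqrt (b j ^ 2 - a ^ 2) * Real.sqrt (1 - c j ^ 2) :=
        mul_le_mul_of_nonneg_right hmain hY.le
      nlinarith only [h1, h2, hsinDpos]
    rw [hldef]
    simp only [if_neg (ne_of_lt hcj1)]
    apply neg_le_neg
    rw [le_div_iff₀ hY]
    exact hsY
  -- Counting
  have hmemK : ∀ j, (j ∈ ({j | ε ≤ Real.arccos ⟪p j, ω⟫} : Finset (Fin m)))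
      ↔ ε ≤ Real.arccos (b j) := by
    intro j
    rw [show (({j | ε ≤ Real.arccos ⟪p j, ω⟫} : Finset (Fin m)))
      = Finset.univ.filter (fun j => ε ≤ Real.arccos ⟪p j, ω⟫) from rfl]
    rw [Finset.mem_filter, hbp' j]
    simp
  set K := ({j | ε ≤ Real.arccos ⟪p j, ω⟫} : Finset (Fin m)) with hK
  have hsum1 : ∑ j ∈ K, l j ≤ (K.card : ℝ) := by
    calc ∑ j ∈ K, l j ≤ ∑ j ∈ K, 1 := Finset.sum_le_sum (fun j _ => hKey2 j)
    _ = (K.card : ℝ) := by simp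
  have hsum2 : ∑ j ∈ Kᶜ, l j ≤ (Kᶜ.card : ℝ) * (-(α/(1-α))) := by
    have h1 : ∀ j ∈ Kᶜ, l j ≤ -(α/(1-α)) := by
      intro j hj
      apply hKey3
      have h2 := Finset.mem_compl.mp hj
      rw [hmemK j] at h2
      push_neg at h2
      exact h2
    calc ∑ j ∈ Kᶜ, l j ≤ ∑ j ∈ Kᶜ, (-(α/(1-α))) := Finset.sum_le_sum h1
    _ = (Kᶜ.card : ℝ) * (-(α/(1-α))) := by rw [Finset.sum_const, nsmul_eq_mul]
  have hsplit : ∑ j, l j = ∑ j ∈ K, l j + ∑ j ∈ Kᶜ, l j :=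
    (Finset.sum_add_sum_compl K l).symm
  have hcardc : (Kᶜ.card : ℝ) = m - K.card := by
    have h1 := Finset.card_add_card_compl K
    rw [Fintype.card_fin] at h1
    have h2 : (K.card : ℝ) + (Kᶜ.card : ℝ) = m := by exact_mod_cast congrArg Nat.cast h1
    linarith only [h2]
  have hfinal : 0 ≤ (K.card : ℝ) + ((m : ℝ) - K.card) * (-(α/(1-α))) := by
    rw [← hcardc]
    linarith only [hKey1, hsplit, hsum1, hsum2]
  have hdm : α/(1-α) * (1-α) = α := div_mul_cancel₀ α (ne_of_gt h1α)
  nlinarith only [hfinal, hβpos, hdm, h1α, (Nat.cast_nonneg (K.card) : (0:ℝ) ≤ K.card)]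
end
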